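/- arXiv:2506.20363 — 7 statements merged into one kernel-verified Lean document; each statement's English description precedes it below -/
import Mathlib

section
/- Let g, m, N, b be integers with 0 ≤ m ≤ g, N ≥ g and b ≥ 1, set r = N − g + 1, and let p be an integer with p > −r. Then the coefficient of x^{N−m} in the formal power series e^{px} · T(x)^r · (T(x) + (b−1)x)^{g−m} ∈ ℚ[[x]] (where for p < 0 one sets e^{px} := (e^{−x})^{−p}, noting e^{x} is invertible in ℚ[[x]]) equals Σ_{k=m}^{g} C(g−m, k−m) · C(N−g+p, k−g+p) · b^{k−m}, with the convention that any term with k−g+p < 0 vanishes. (Equivalently, this is the coefficient of x^{r−1} in the Laurent expansion of e^{px}·td^r(x)·(td(x)/x + b − 1)^{g−m}.) -/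
open PowerSeries

/-- The formal power series `e^(p·x) ∈ ℚ[[x]]` for an integer `p`: for `p ≥ 0` it is
`(e^x)^p`, and for `p < 0` it is `(e^(-x))^(-p)`. -/
noncomputable def expZ (p : ℤ) : PowerSeries ℚ :=
  if 0 ≤ p then (PowerSeries.exp ℚ) ^ p.toNat
  else (PowerSeries.rescale (-1) (PowerSeries.exp ℚ)) ^ (-p).toNat

noncomputable def Ee : PowerSeries ℚ := PowerSeries.rescale (-1) (PowerSeries.exp ℚ)

lemma exp_mul_Ee : exp ℚ * Ee = 1 := exp_mul_exp_neg_eq_one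
noncomputable def Eu : (PowerSeries ℚ)ˣ :=
  ⟨exp ℚ, Ee, exp_mul_Ee, by rw [mul_comm]; exact exp_mul_Ee⟩
lemma Eu_inv_val : ((Eu⁻¹ : (PowerSeries ℚ)ˣ) : PowerSeries ℚ) = Ee := rfl
lemma expZ_eq (p : ℤ) : expZ p = ((Eu ^ p : (PowerSeries ℚ)ˣ) : PowerSeries ℚ) := by
  rcases le_or_gt 0 p with h | h
  · rw [expZ, if_pos h]
    conv_rhs => rw [← Int.toNat_of_nonneg h]
    rw [zpow_natCast, Units.val_pow_eq_pow_val]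
    rfl
  · rw [expZ, if_neg (not_le.mpr h)]
    have : p = -((-p).toNat : ℤ) := by omega
    conv_rhs => rw [this]
    rw [zpow_neg, zpow_natCast, ← inv_pow, Units.val_pow_eq_pow_val, Eu_inv_val]
    simp [Ee]
lemma expZ_mul (a b : ℤ) : expZ (a + b) = expZ a * expZ b := by
  rw [expZ_eq, expZ_eq, expZ_eq, zpow_add, Units.val_mul]
lemma Ee_pow_eq_expZ (j : ℕ) : Ee ^ j = expZ (-j) := by
  rw [expZ_eq, zpow_neg, zpow_natCast, ← inv_pow, Units.val_pow_eq_pow_val, Eu_inv_val]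

noncomputable def uu : PowerSeries ℚ := 1 - Ee
lemma coeff_Ee (n : ℕ) : coeff n Ee = (-1)^n * (1 / n.factorial) := by
  simp [Ee, coeff_rescale, coeff_exp]
lemma derivative_Ee : derivative ℚ Ee = -Ee := by
  ext n
  simp [PowerSeries.coeff_derivative, coeff_Ee, pow_succ, Nat.factorial_succ]
  field_simp
lemma constantCoeff_Ee : constantCoeff Ee = 1 := by
  rw [← coeff_zero_eq_constantCoeff_apply, coeff_Ee]; simp
lemma constantCoeff_uu : constantCoeff uu = 0 := by
  simp [uu, constantCoeff_Ee]
lemma X_dvd_uu : (X : PowerSeries ℚ) ∣ uu := X_dvd_iff.mpr constantCoeff_uu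
lemma coeff_one_uu : coeff 1 uu = 1 := by
  simp [uu, coeff_Ee]
lemma derivative_uu : derivative ℚ uu = Ee := by
  simp [uu, derivative_Ee]

lemma lemS (q n : ℕ) :
    (X : PowerSeries ℚ) ^ (n + 1) ∣
      Ee ^ q * (∑ k ∈ Finset.range (n + 1), ((q + k - 1).choose k : ℚ⟦X⟧) * uu ^ k) - 1 := by
  induction q with
  | zero =>
    have hsum : (∑ k ∈ Finset.range (n + 1), ((0 + k - 1).choose k : ℚ⟦X⟧) * uu ^ k) = 1 := by
      rw [Finset.sum_eq_single 0]
      · simp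
      · intro k _ hk
        rw [Nat.choose_eq_zero_of_lt (by omega)]
        simp
      · intro h; exact absurd (Finset.mem_range.mpr (by omega)) h
    rw [hsum]; simp
  | succ q IH =>
    have key : Ee * (∑ k ∈ Finset.range (n + 1), ((q + 1 + k - 1).choose k : ℚ⟦X⟧) * uu ^ k)
        = (∑ k ∈ Finset.range (n + 1), ((q + k - 1).choose k : ℚ⟦X⟧) * uu ^ k)
          - ((q + n).choose n : ℚ⟦X⟧) * uu ^ (n + 1) := by
      have hEe : Ee = 1 - uu := by simp [uu]
      have hidx : ∀ k : ℕ, q + 1 + k - 1 = q + k := by omega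
      simp only [hidx]
      rw [hEe, sub_mul, one_mul, Finset.mul_sum]
      have hterm : ∀ k ∈ Finset.range (n + 1),
          uu * (((q + k).choose k : ℚ⟦X⟧) * uu ^ k) = ((q + k).choose k : ℚ⟦X⟧) * uu ^ (k + 1) :=
        fun k _ => by ring
      rw [Finset.sum_congr rfl hterm]
      rw [Finset.sum_range_succ (fun k => ((q + k).choose k : ℚ⟦X⟧) * uu ^ (k + 1)) n]
      have hdiff : (∑ k ∈ Finset.range (n + 1), ((q + k).choose k : ℚ⟦X⟧) * uu ^ k)
          - (∑ k ∈ Finset.range (n + 1), ((q + k - 1).choose k : ℚ⟦X⟧) * uu ^ k)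
          = ∑ k ∈ Finset.range n, ((q + k).choose k : ℚ⟦X⟧) * uu ^ (k + 1) := by
        rw [← Finset.sum_sub_distrib]
        have hstep : ∀ i ∈ Finset.range n,
            (((q + (i + 1)).choose (i + 1) : ℚ⟦X⟧) * uu ^ (i + 1)
              - ((q + (i + 1) - 1).choose (i + 1) : ℚ⟦X⟧) * uu ^ (i + 1))
            = ((q + i).choose i : ℚ⟦X⟧) * uu ^ (i + 1) := by
          intro i _
          have h1 : q + (i + 1) = (q + i) + 1 := by omega
          have h2 : q + (i + 1) - 1 = q + i := by omega
          rw [h2, h1, Nat.choose_succ_succ (q + i) i]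
          push_cast; ring
        rw [Finset.sum_range_succ']
        rw [Finset.sum_congr rfl hstep]
        simp
      linear_combination hdiff
    have expand : Ee ^ (q + 1) * (∑ k ∈ Finset.range (n + 1), ((q + 1 + k - 1).choose k : ℚ⟦X⟧) * uu ^ k) - 1
        = (Ee ^ q * (∑ k ∈ Finset.range (n + 1), ((q + k - 1).choose k : ℚ⟦X⟧) * uu ^ k) - 1)
          - ((q + n).choose n : ℚ⟦X⟧) * (uu ^ (n + 1) * Ee ^ q) := by
      calc Ee ^ (q + 1) * (∑ k ∈ Finset.range (n + 1), ((q + 1 + k - 1).choose k : ℚ⟦X⟧) * uu ^ k) - 1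
          = Ee ^ q * (Ee * (∑ k ∈ Finset.range (n + 1), ((q + 1 + k - 1).choose k : ℚ⟦X⟧) * uu ^ k)) - 1 := by ring
      _ = Ee ^ q * ((∑ k ∈ Finset.range (n + 1), ((q + k - 1).choose k : ℚ⟦X⟧) * uu ^ k)
            - ((q + n).choose n : ℚ⟦X⟧) * uu ^ (n + 1)) - 1 := by rw [key]
      _ = _ := by ring
    rw [expand]
    apply dvd_sub IH
    apply Dvd.dvd.mul_left
    apply Dvd.dvd.mul_right
    exact pow_dvd_pow_of_dvd X_dvd_uu (n + 1)

section T
variable (T : PowerSeries ℚ)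

lemma constT (hT : T * uu = X) : constantCoeff T = 1 := by
  have h1 := congrArg (coeff 1) hT
  rw [coeff_one_X, coeff_mul] at h1
  rw [Finset.Nat.sum_antidiagonal_eq_sum_range_succ_mk] at h1
  simp [Finset.sum_range_succ, constantCoeff_uu, coeff_one_uu,
    coeff_zero_eq_constantCoeff] at h1
  exact h1

lemma EeT (hT : T * uu = X) : Ee * T = T - X := by
  rw [← hT]; unfold uu; ring

lemma lemA' (hT : T * uu = X) (s : ℕ) (hs : 1 ≤ s) :
    coeff s (Ee * T ^ (s + 1)) = 0 := by
  obtain ⟨t, rfl⟩ : ∃ t, s = t + 1 := ⟨s - 1, by omega⟩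
  have hd := congrArg (derivative ℚ) hT
  rw [Derivation.leibniz, derivative_uu, derivative_X, smul_eq_mul, smul_eq_mul] at hd
  have hTe : T * Ee = 1 - uu * derivative ℚ T := by linear_combination hd
  have e1 : Ee * T ^ (t + 1 + 1) = T ^ (t + 1) - X * (derivative ℚ T * T ^ t) := by
    calc Ee * T ^ (t + 1 + 1) = (T * Ee) * T ^ (t + 1) := by ring
    _ = (1 - uu * derivative ℚ T) * T ^ (t + 1) := by rw [hTe]
    _ = T ^ (t + 1) - (T * uu) * (derivative ℚ T * T ^ t) := by ring
    _ = _ := by rw [hT]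
  have h0 := Derivation.leibniz_pow (derivative ℚ) (a := T) (t + 1)
  simp only [Nat.add_sub_cancel, smul_eq_mul] at h0
  have h2 := congrArg (coeff t) h0
  rw [PowerSeries.coeff_derivative, ← Nat.cast_smul_eq_nsmul ℚ, map_smul, smul_eq_mul] at h2
  push_cast at h2
  have hne : ((t : ℚ) + 1) ≠ 0 := by positivity
  have h3 : coeff (t + 1) (T ^ (t + 1)) = coeff t (T ^ t * derivative ℚ T) := by
    apply mul_left_cancel₀ hne
    linear_combination h2
  rw [e1, map_sub, PowerSeries.coeff_succ_X_mul]
  rw [mul_comm ((derivative ℚ) T), h3, sub_self]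

lemma lemA0 (hT : T * uu = X) : coeff 0 (Ee * T) = 1 := by
  rw [coeff_zero_eq_constantCoeff, map_mul, constantCoeff_Ee, constT T hT, mul_one]

lemma lemA'' (hT : T * uu = X) (s : ℕ) :
    coeff s (Ee * T ^ (s + 1)) = if s = 0 then 1 else 0 := by
  cases s with
  | zero => rw [if_pos rfl, pow_one]; exact lemA0 T hT
  | succ t => rw [if_neg (Nat.succ_ne_zero t)]; exact lemA' T hT (t + 1) (by omega)

lemma uT_pow (hT : T * uu = X) (k n : ℕ) (h : k ≤ n) :
    uu ^ k * T ^ n = X ^ k * T ^ (n - k) := by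
  have h1 : T ^ n = T ^ k * T ^ (n - k) := by rw [← pow_add]; congr 1; omega
  calc uu ^ k * T ^ n = (T * uu) ^ k * T ^ (n - k) := by rw [h1, mul_pow]; ring
  _ = X ^ k * T ^ (n - k) := by rw [hT]

lemma lemA (hT : T * uu = X) (n k : ℕ) :
    coeff n (uu ^ k * (Ee * T ^ (n + 1))) = if k = n then 1 else 0 := by
  rcases le_or_gt k n with h | h
  · have h2 : uu ^ k * (Ee * T ^ (n + 1)) = X ^ k * (Ee * T ^ ((n - k) + 1)) := by
      have h3 := uT_pow T hT k (n + 1) (by omega)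
      rw [show n + 1 - k = (n - k) + 1 from by omega] at h3
      calc uu ^ k * (Ee * T ^ (n + 1)) = Ee * (uu ^ k * T ^ (n + 1)) := by ring
      _ = Ee * (X ^ k * T ^ ((n - k) + 1)) := by rw [h3]
      _ = X ^ k * (Ee * T ^ ((n - k) + 1)) := by ring
    rw [h2, PowerSeries.coeff_X_pow_mul' _ _ _, if_pos h, lemA'' T hT (n - k)]
    by_cases hk : k = n
    · subst hk; simp
    · rw [if_neg (by omega), if_neg hk]
  · have hdvd : (X : PowerSeries ℚ) ^ (n + 1) ∣ uu ^ k * (Ee * T ^ (n + 1)) := by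
      apply dvd_mul_of_dvd_left
      exact dvd_trans (pow_dvd_pow_of_dvd X_dvd_uu (n + 1)) (pow_dvd_pow uu (by omega))
    rw [PowerSeries.X_pow_dvd_iff.mp hdvd n (by omega), if_neg (by omega)]

lemma coeff_natCast_mul (n c : ℕ) (f : ℚ⟦X⟧) :
    coeff n ((c : ℚ⟦X⟧) * f) = (c : ℚ) * coeff n f := by
  rw [← map_natCast (C (R := ℚ)) c, coeff_C_mul]

lemma lemB (hT : T * uu = X) (n : ℕ) (q : ℤ) (hq : -(n : ℤ) ≤ q) :
    coeff n (expZ q * T ^ (n + 1)) =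
      if q < 0 then 0 else ((q + n).toNat.choose n : ℚ) := by
  rcases lt_or_ge q 0 with h | h
  · rw [if_pos h]
    set j := (-q).toNat with hj
    have hj1 : 1 ≤ j := by omega
    have hjn : j ≤ n := by omega
    have hE : expZ q = Ee ^ j := by
      simp only [expZ, if_neg (not_le.mpr h)]; rfl
    have hEe1 : Ee = -uu + 1 := by
      have huu : uu = 1 - Ee := rfl
      rw [huu]; ring
    have hEj : expZ q * T ^ (n + 1)
        = ∑ i ∈ Finset.range ((j - 1) + 1),
            C ((-1 : ℚ) ^ i * ((j - 1).choose i : ℚ)) * (uu ^ i * (Ee * T ^ (n + 1))) := by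
      rw [hE]
      conv_lhs => rw [show j = (j - 1) + 1 from by omega]
      rw [pow_succ]
      conv_lhs => rw [show Ee ^ (j - 1) = (-uu + 1) ^ (j - 1) from by rw [← hEe1]]
      rw [add_pow, Finset.sum_mul, Finset.sum_mul]
      apply Finset.sum_congr rfl
      intro i _
      rw [map_mul, map_pow, map_neg, map_one, map_natCast]
      rw [neg_pow uu i]
      ring
    rw [hEj, map_sum]
    rw [Finset.sum_congr rfl (fun i hi => by
      rw [coeff_C_mul, lemA T hT n i,
        if_neg (by rw [Finset.mem_range] at hi; omega), mul_zero])]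
    simp
  · rw [if_neg (not_lt.mpr h)]
    set qn := q.toNat with hqn
    have hE : expZ q = exp ℚ ^ qn := by
      simp only [expZ, if_pos h]; rfl
    set S : ℚ⟦X⟧ := ∑ k ∈ Finset.range (n + 1), ((qn + 1 + k - 1).choose k : ℚ⟦X⟧) * uu ^ k
      with hS
    have hdvd : (X : ℚ⟦X⟧) ^ (n + 1) ∣ S - exp ℚ ^ (qn + 1) := by
      have h1 := lemS (qn + 1) n
      have h2 : exp ℚ ^ (qn + 1) * (Ee ^ (qn + 1) * S - 1) = S - exp ℚ ^ (qn + 1) := by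
        have h3 : exp ℚ ^ (qn + 1) * Ee ^ (qn + 1) = 1 := by
          rw [← mul_pow, exp_mul_Ee, one_pow]
        calc exp ℚ ^ (qn + 1) * (Ee ^ (qn + 1) * S - 1)
            = (exp ℚ ^ (qn + 1) * Ee ^ (qn + 1)) * S - exp ℚ ^ (qn + 1) := by ring
        _ = S - exp ℚ ^ (qn + 1) := by rw [h3, one_mul]
      rw [← h2]
      exact Dvd.dvd.mul_left h1 _
    have hsplit : expZ q * T ^ (n + 1)
        = S * (Ee * T ^ (n + 1)) - (S - exp ℚ ^ (qn + 1)) * (Ee * T ^ (n + 1)) := by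
      rw [hE]
      have h3 : exp ℚ ^ qn = exp ℚ ^ (qn + 1) * Ee := by
        rw [pow_succ, mul_assoc, exp_mul_Ee, mul_one]
      rw [h3]; ring
    rw [hsplit, map_sub]
    have hz : coeff n ((S - exp ℚ ^ (qn + 1)) * (Ee * T ^ (n + 1))) = 0 := by
      apply PowerSeries.X_pow_dvd_iff.mp (Dvd.dvd.mul_right hdvd _) n (by omega)
    rw [hz, sub_zero, hS, Finset.sum_mul, map_sum]
    rw [Finset.sum_congr rfl (fun k hk => by
      rw [mul_assoc, coeff_natCast_mul n _ _, lemA T hT n k])]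
    rw [Finset.sum_eq_single n]
    · rw [if_pos rfl, mul_one]
      congr 2
      omega
    · intro k _ hk; rw [if_neg hk, mul_zero]
    · intro hn; exact absurd (Finset.mem_range.mpr (by omega)) hn

lemma expZ_mul_Ee_pow (p : ℤ) (j : ℕ) : expZ p * Ee ^ j = expZ (p - j) := by
  rw [Ee_pow_eq_expZ, ← expZ_mul, Int.sub_eq_add_neg]

end T

/-- Let `0 ≤ m ≤ g ≤ N`, `b ≥ 1`, `r = N - g + 1`, and let `p` be an integer with
`p > -r`.  Then the coefficient of `x^(N-m)` in
`e^(p·x) · T(x)^r · (T(x) + (b-1)·x)^(g-m)`,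
where `T` is the Todd power series (the unique power series with
`T(x)·(1 - e^(-x)) = x`), equals
`∑_{k=m}^{g} C(g-m, k-m) · C(N-g+p, k-g+p) · b^(k-m)`,
with the convention that terms with `k-g+p < 0` vanish. -/
theorem coeff_laughlin_chern (g m N b : ℕ) (hm : m ≤ g) (hN : g ≤ N) (hb : 1 ≤ b)
    (p : ℤ) (hp : p > -((N : ℤ) - g + 1))
    (T : PowerSeries ℚ)
    (hT : T * (1 - PowerSeries.rescale (-1) (PowerSeries.exp ℚ)) = PowerSeries.X) :
    PowerSeries.coeff (R := ℚ) (N - m)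
      (expZ p * T ^ (N - g + 1) * (T + ((b : ℚ) - 1) • PowerSeries.X) ^ (g - m)) =
    ∑ k ∈ Finset.Icc m g,
      ((g - m).choose (k - m) : ℚ) *
        (if (k : ℤ) - g + p < 0 then 0
          else (((N : ℤ) - g + p).toNat.choose ((k : ℤ) - g + p).toNat : ℚ)) *
        (b : ℚ) ^ (k - m) := by
  have hT' : T * uu = X := hT
  set d := g - m with hd
  set r := N - g + 1 with hr
  set n := N - m with hn
  have hrd : r + d = n + 1 := by omega
  have hdn : d ≤ n := by omega
  -- rewrite the base of the power
  have hTb : T + ((b : ℚ) - 1) • (X : ℚ⟦X⟧) = T * ((b : ℚ⟦X⟧) * uu + Ee) := by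
    have h1 : Ee * T = T - X := EeT T hT'
    have hsmul : ((b : ℚ) - 1) • (X : ℚ⟦X⟧) = ((b : ℚ⟦X⟧) - 1) * X := by
      rw [PowerSeries.smul_eq_C_mul, map_sub, map_one, map_natCast]
    have h2 : T * ((b : ℚ⟦X⟧) * uu + Ee) = (b : ℚ⟦X⟧) * (T * uu) + Ee * T := by ring
    rw [hsmul, h2, h1, hT']
    ring
  have hexpand : expZ p * T ^ r * (T + ((b : ℚ) - 1) • (X : ℚ⟦X⟧)) ^ d
      = ∑ i ∈ Finset.range (d + 1),
          ((d.choose i * b ^ i : ℕ) : ℚ⟦X⟧) *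
            (X ^ i * (expZ (p - (d - i : ℕ)) * T ^ ((n - i) + 1))) := by
    rw [hTb, mul_pow, add_pow]
    simp only [Finset.mul_sum]
    apply Finset.sum_congr rfl
    intro i hi
    rw [Finset.mem_range] at hi
    have hid : i ≤ d := by omega
    have e1 : T ^ r * T ^ d = T ^ (n + 1) := by rw [← pow_add, hrd]
    have e2 : uu ^ i * T ^ (n + 1) = X ^ i * T ^ ((n - i) + 1) := by
      rw [uT_pow T hT' i (n + 1) (by omega), show n + 1 - i = (n - i) + 1 from by omega]
    have e3 : expZ p * Ee ^ (d - i) = expZ (p - (d - i : ℕ)) := expZ_mul_Ee_pow p (d - i)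
    have e4 : expZ p * T ^ r * (T ^ d * (((b : ℚ⟦X⟧) * uu) ^ i * Ee ^ (d - i) * ↑(d.choose i)))
        = ((d.choose i * b ^ i : ℕ) : ℚ⟦X⟧) *
            ((expZ p * Ee ^ (d - i)) * (uu ^ i * (T ^ r * T ^ d))) := by
      push_cast
      ring
    rw [e4, e1, e3, e2]
    ring
  rw [hexpand, map_sum]
  have hIcc : ∑ k ∈ Finset.Icc m g,
      ((g - m).choose (k - m) : ℚ) *
        (if (k : ℤ) - g + p < 0 then 0
          else (((N : ℤ) - g + p).toNat.choose ((k : ℤ) - g + p).toNat : ℚ)) *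
        (b : ℚ) ^ (k - m)
      = ∑ i ∈ Finset.range (d + 1),
        ((d.choose i : ℚ) *
          (if (↑(m + i) : ℤ) - g + p < 0 then 0
            else (((N : ℤ) - g + p).toNat.choose ((↑(m + i) : ℤ) - g + p).toNat : ℚ)) *
          (b : ℚ) ^ i) := by
    rw [← Finset.Ico_add_one_right_eq_Icc, Finset.sum_Ico_eq_sum_range]
    rw [show g + 1 - m = d + 1 from by omega]
    apply Finset.sum_congr rfl
    intro i _
    rw [show m + i - m = i from by omega]
  rw [hIcc]
  apply Finset.sum_congr rfl
  intro i hi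
  rw [Finset.mem_range] at hi
  have hid : i ≤ d := by omega
  rw [coeff_natCast_mul, PowerSeries.coeff_X_pow_mul' _ _ _, if_pos (by omega : i ≤ n)]
  rw [lemB T hT' (n - i) (p - (d - i : ℕ)) (by push_cast; omega)]
  have hcond : (p - ((d - i : ℕ) : ℤ) < 0) ↔ ((↑(m + i) : ℤ) - g + p < 0) := by
    push_cast
    omega
  by_cases hc : p - ((d - i : ℕ) : ℤ) < 0
  · rw [if_pos hc, if_pos (hcond.mp hc), mul_zero, mul_zero, zero_mul]
  · rw [if_neg hc, if_neg (fun h => hc (hcond.mpr h))]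
    have htop : (p - ((d - i : ℕ) : ℤ) + ((n - i : ℕ) : ℤ)).toNat = ((N : ℤ) - g + p).toNat := by
      push_cast
      omega
    have hbot : ((↑(m + i) : ℤ) - g + p).toNat ≤ ((N : ℤ) - g + p).toNat := by
      push_cast
      omega
    have hnn : (n - i : ℕ) = ((N : ℤ) - g + p).toNat - ((↑(m + i) : ℤ) - g + p).toNat := by
      push_cast
      omega
    rw [htop, hnn, Nat.choose_symm hbot]
    push_cast
    ring
end

section
/- For every integer r ≥ 1, the coefficient of x^{r−1} in the formal power series T(x)^r ∈ ℚ[[x]] equals 1. -/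
open PowerSeries

private lemma todd_deriv_E : d⁄dX ℚ (PowerSeries.rescale (-1) (PowerSeries.exp ℚ)) =
    -(PowerSeries.rescale (-1) (PowerSeries.exp ℚ)) := by
  ext n
  rw [coeff_derivative, coeff_rescale, coeff_exp, map_neg, coeff_rescale, coeff_exp]
  push_cast
  field_simp [Nat.factorial_succ, pow_succ]
  rw [Nat.factorial_succ]; push_cast; ring

/-- For every integer `r ≥ 1`, the coefficient of `x^(r-1)` in `T(x)^r` equals `1`,
where `T` is the Todd power series, the unique power series with
`T(x) * (1 - e^(-x)) = x`. -/
theorem coeff_todd_pow_self (r : ℕ) (hr : 1 ≤ r)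
    (T : PowerSeries ℚ)
    (hT : T * (1 - PowerSeries.rescale (-1) (PowerSeries.exp ℚ)) = PowerSeries.X) :
    PowerSeries.coeff (r - 1) (T ^ r) = 1 := by
  set E := PowerSeries.rescale (-1) (PowerSeries.exp ℚ) with hE
  set f : PowerSeries ℚ := 1 - E with hf
  -- derivative of f
  have hdf : d⁄dX ℚ f = 1 - f := by
    rw [hf, map_sub, todd_deriv_E]
    simp
    exact hE.symm
  -- differentiate hT
  have hD : T * (1 - f) + f * (d⁄dX ℚ T) = 1 := by
    have := congrArg (d⁄dX ℚ) hT
    rwa [Derivation.leibniz, derivative_X, hdf, smul_eq_mul, smul_eq_mul] at this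
  -- the ODE : X * T' = T - T^2 + X * T
  have hODE : PowerSeries.X * (d⁄dX ℚ T) = T - T ^ 2 + PowerSeries.X * T := by
    have h2 := congrArg (fun s => T * s) hD
    simp only [mul_add, mul_one] at h2
    have hXT : T * (f * d⁄dX ℚ T) = PowerSeries.X * d⁄dX ℚ T := by
      rw [← mul_assoc, mul_comm T f, mul_comm f T, hT]
    rw [hXT] at h2
    linear_combination h2 + T * hT
  -- key induction: coeff k (T^(k+1)) = 1
  have f0 : PowerSeries.coeff 0 f = 0 := by
    rw [hf, map_sub, hE, coeff_rescale, coeff_exp]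
    norm_num
  have hf1 : PowerSeries.coeff 1 f = 1 := by
    rw [hf, map_sub, hE, coeff_rescale, coeff_exp]
    norm_num
  have key : ∀ k : ℕ, PowerSeries.coeff k (T ^ (k + 1)) = 1 := by
    intro k
    induction k with
    | zero =>
      -- base case: constant coefficient of T is 1
      have h1 := congrArg (PowerSeries.coeff 1) hT
      rw [coeff_mul, Finset.Nat.sum_antidiagonal_eq_sum_range_succ_mk] at h1
      simp only [Finset.sum_range_succ, Finset.sum_range_zero, zero_add, coeff_X] at h1
      norm_num [hf1, f0] at h1
      simpa using h1
    | succ k ih =>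
      have hpow : d⁄dX ℚ (T ^ (k + 1)) =
          PowerSeries.C ((k : ℚ) + 1) * T ^ k * d⁄dX ℚ T := by
        rw [Derivation.leibniz_pow, Nat.add_sub_cancel, smul_eq_mul,
          ← Nat.cast_smul_eq_nsmul ℚ, PowerSeries.smul_eq_C_mul, mul_assoc]
        push_cast
        ring
      have h3 : PowerSeries.X * d⁄dX ℚ (T ^ (k + 1)) =
          PowerSeries.C ((k : ℚ) + 1) *
            (T ^ (k + 1) - T ^ (k + 2) + PowerSeries.X * T ^ (k + 1)) := by
        rw [hpow]
        linear_combination (PowerSeries.C ((k : ℚ) + 1) * T ^ k) * hODE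
      have h4 := congrArg (PowerSeries.coeff (k + 1)) h3
      rw [coeff_succ_X_mul, coeff_derivative, coeff_C_mul] at h4
      simp only [map_add, map_sub, coeff_succ_X_mul, ih] at h4
      have hk : ((k : ℚ) + 1) ≠ 0 := by positivity
      have := h4
      field_simp at this
      nlinarith [this]
  have : r - 1 + 1 = r := Nat.succ_pred_eq_of_pos hr
  calc PowerSeries.coeff (r - 1) (T ^ r)
      = PowerSeries.coeff (r - 1) (T ^ (r - 1 + 1)) := by rw [this]
    _ = 1 := key (r - 1)
end

section
/- Let r ≥ 1 be an integer and let p be an integer with p > −r. Then the coefficient of x^{r−1} in the formal power series e^{px} · T(x)^r ∈ ℚ[[x]] (where for p < 0 one sets e^{px} := (e^{−x})^{−p}) equals the binomial coefficient C(r−1+p, p) when p ≥ 0, and equals 0 when −r < p < 0. -/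
open PowerSeries

local notation "Eexp" => PowerSeries.rescale (-1 : ℚ) (PowerSeries.exp ℚ)

lemma expZ_zero : expZ 0 = 1 := by simp [expZ]

lemma expZ_sub_one (p : ℤ) : expZ (p - 1) = expZ p * Eexp := by
  unfold expZ
  rcases lt_trichotomy p 0 with h | h | h
  · rw [if_neg (by omega), if_neg (by omega),
      show (-(p-1)).toNat = (-p).toNat + 1 by omega, pow_succ]
  · subst h
    simp only [show (0:ℤ) - 1 = -1 by ring]
    rw [if_neg (by omega), if_pos le_rfl]
    norm_num
  · rw [if_pos (show (0:ℤ) ≤ p - 1 by omega), if_pos (by omega : (0:ℤ) ≤ p),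
      show p.toNat = (p-1).toNat + 1 by omega, pow_succ, mul_assoc,
      show PowerSeries.exp ℚ * Eexp = 1 from PowerSeries.exp_mul_exp_neg_eq_one, mul_one]

lemma coeff_Eexp (n : ℕ) : PowerSeries.coeff n Eexp = (-1)^n * (1 / n.factorial : ℚ) := by
  rw [PowerSeries.coeff_rescale, PowerSeries.coeff_exp]
  simp [Algebra.algebraMap_self]

lemma constEexp : PowerSeries.constantCoeff Eexp = 1 := by
  rw [← PowerSeries.coeff_zero_eq_constantCoeff_apply, coeff_Eexp]; norm_num

lemma constantCoeff_expZ (p : ℤ) : PowerSeries.constantCoeff (expZ p) = 1 := by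
  unfold expZ
  split <;> rw [map_pow] <;> simp [constEexp, PowerSeries.constantCoeff_exp]

lemma deriv_Eexp : d⁄dX ℚ Eexp = -Eexp := by
  ext n
  rw [PowerSeries.coeff_derivative, map_neg, coeff_Eexp, coeff_Eexp, Nat.factorial_succ]
  push_cast
  have h1 : ((n.factorial : ℚ)) ≠ 0 := by positivity
  field_simp
  ring

variable {T : PowerSeries ℚ}
  (hT : T * (1 - PowerSeries.rescale (-1) (PowerSeries.exp ℚ)) = PowerSeries.X)

include hT

lemma constT_s2 : PowerSeries.constantCoeff T = 1 := by
  have h := congrArg (PowerSeries.coeff 1) hT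
  rw [PowerSeries.coeff_one_X, PowerSeries.coeff_mul,
    Finset.Nat.sum_antidiagonal_eq_sum_range_succ_mk, Finset.sum_range_succ,
    Finset.sum_range_one] at h
  simp [coeff_Eexp, constEexp, PowerSeries.coeff_zero_eq_constantCoeff, Nat.factorial] at h
  exact h

lemma ET : Eexp * T = T - PowerSeries.X := by linear_combination -hT

lemma derivT : PowerSeries.X * d⁄dX ℚ T = T + PowerSeries.X * T - T^2 := by
  have h := congrArg (d⁄dX ℚ) hT
  rw [Derivation.leibniz, PowerSeries.derivative_X, map_sub,
    Derivation.map_one_eq_zero, deriv_Eexp] at h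
  have h2 : T * Eexp + (1 - Eexp) * d⁄dX ℚ T = 1 := by
    simpa [smul_eq_mul, sub_neg_eq_add] using h
  linear_combination T * h2 + (T - d⁄dX ℚ T) * hT

lemma anchor : ∀ n : ℕ, PowerSeries.coeff n (T ^ (n+1)) = 1 := by
  intro n
  induction n with
  | zero => simpa using constT_s2 hT
  | succ n ih =>
    have h0 := congrArg (PowerSeries.coeff n) (Derivation.leibniz_pow (d⁄dX ℚ) T (n+1))
    rw [PowerSeries.coeff_derivative, Nat.add_sub_cancel] at h0
    simp only [smul_eq_mul] at h0
    rw [map_nsmul] at h0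
    simp only [nsmul_eq_mul] at h0
    have e2 : PowerSeries.X * (T^n * d⁄dX ℚ T) =
        T^(n+1) + PowerSeries.X * T^(n+1) - T^(n+2) := by
      linear_combination T^n * derivT hT
    have h1 := congrArg (PowerSeries.coeff (n+1)) e2
    rw [PowerSeries.coeff_succ_X_mul, map_sub, map_add, PowerSeries.coeff_succ_X_mul, ih] at h1
    rw [h1] at h0
    have hne : ((n:ℚ)+1) ≠ 0 := by positivity
    push_cast at h0
    nlinarith [h0]

lemma rec_step (p : ℤ) (m : ℕ) :
    expZ (p-1) * T^(m+1) =
      expZ p * T^(m+1) - PowerSeries.X * (expZ p * T^m) := by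
  rw [expZ_sub_one]
  linear_combination (expZ p * T^m) * ET hT

lemma pos_case : ∀ k r : ℕ,
    PowerSeries.coeff r (expZ (k:ℤ) * T^(r+1)) = ((r+k).choose k : ℚ) := by
  intro k
  induction k with
  | zero =>
    intro r
    simpa [expZ_zero] using anchor hT r
  | succ k ihk =>
    intro r
    induction r with
    | zero =>
      rw [PowerSeries.coeff_zero_eq_constantCoeff_apply, map_mul, constantCoeff_expZ]
      simp [constT_s2 hT]
    | succ r ihr =>
      have h := congrArg (PowerSeries.coeff (r+1)) (rec_step hT ((k:ℤ)+1) (r+1))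
      rw [show ((k:ℤ)+1) - 1 = (k:ℤ) by ring] at h
      rw [map_sub, PowerSeries.coeff_succ_X_mul] at h
      rw [ihk (r+1)] at h
      rw [show ((k:ℤ)+1) = ((k+1 : ℕ):ℤ) by push_cast; ring] at h
      rw [ihr] at h
      have hc : ((r+1+(k+1)).choose (k+1) : ℚ)
          = ((r+1+k).choose k : ℚ) + ((r+(k+1)).choose (k+1) : ℚ) := by
        rw [show r+1+(k+1) = (r+1+k)+1 by ring, Nat.choose_succ_succ]
        push_cast
        rw [show r+1+k = r+(k+1) by ring]
      rw [hc]
      linarith [h]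

lemma neg_case : ∀ k r : ℕ, 1 ≤ k → k ≤ r →
    PowerSeries.coeff r (expZ (-(k:ℤ)) * T^(r+1)) = 0 := by
  intro k
  induction k with
  | zero => omega
  | succ k ihk =>
    intro r h1 hkr
    obtain ⟨s, rfl⟩ : ∃ s, r = s + 1 := ⟨r - 1, by omega⟩
    match k, ihk with
    | 0, _ =>
      have h := congrArg (PowerSeries.coeff (s+1)) (rec_step hT 0 (s+1))
      rw [show (0:ℤ) - 1 = -((1:ℕ):ℤ) by norm_num, expZ_zero, one_mul, one_mul,
        map_sub, PowerSeries.coeff_succ_X_mul, anchor hT (s+1), anchor hT s] at h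
      rw [h]; ring
    | (k+1), ihk =>
      have h := congrArg (PowerSeries.coeff (s+1)) (rec_step hT (-((k+1:ℕ):ℤ)) (s+1))
      rw [show -((k+1:ℕ):ℤ) - 1 = -((k+2:ℕ):ℤ) by push_cast; ring,
        map_sub, PowerSeries.coeff_succ_X_mul] at h
      rw [ihk (s+1) (by omega) (by omega), ihk s (by omega) (by omega)] at h
      rw [show k+1+1 = k+2 by ring, h]; ring

omit hT

/-- Let `r ≥ 1` and let `p` be an integer with `p > -r`.  The coefficient of
`x^(r-1)` in `e^(p·x) · T(x)^r`, where `T` is the Todd power series (the unique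
power series with `T(x)·(1 - e^(-x)) = x`), equals the binomial coefficient
`C(r-1+p, p)` when `p ≥ 0`, and equals `0` when `-r < p < 0`. -/
theorem coeff_exp_mul_todd_pow (r : ℕ) (hr : 1 ≤ r) (p : ℤ) (hp : p > -(r : ℤ))
    (T : PowerSeries ℚ)
    (hT : T * (1 - PowerSeries.rescale (-1) (PowerSeries.exp ℚ)) = PowerSeries.X) :
    (0 ≤ p → PowerSeries.coeff (r - 1) (expZ p * T ^ r) =
      ((r - 1 + p.toNat).choose p.toNat : ℚ)) ∧
    (p < 0 → PowerSeries.coeff (r - 1) (expZ p * T ^ r) = 0) := by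
  obtain ⟨s, rfl⟩ : ∃ s, r = s + 1 := ⟨r - 1, by omega⟩
  rw [show s + 1 - 1 = s by omega]
  constructor
  · intro hp0
    rw [show p = (p.toNat : ℤ) from (Int.toNat_of_nonneg hp0).symm]
    rw [Int.toNat_natCast]
    exact pos_case hT p.toNat s
  · intro hneg
    have hk1 : 1 ≤ (-p).toNat := by omega
    have hks : (-p).toNat ≤ s := by omega
    rw [show p = -(((-p).toNat : ℕ) : ℤ) by omega]
    exact neg_case hT (-p).toNat s hk1 hks
end

section
/- Let r ≥ 1, s ≥ 0, p ≥ 0, b ≥ 1 be integers. Then in ℚ[[x]] the coefficient of x^{r+s−1} in e^{px} · T(x)^r · (T(x) + (b−1)x)^s equals the coefficient of x^{r+s−1} in (1 + (b−1)x)^s · (1−x)^{−(p+1)}, where (1−x)^{−1} denotes the multiplicative inverse of the invertible power series 1−x. (This is the change of variables z = 1 − e^{−x} in the residue computation.) -/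
open PowerSeries

noncomputable def Nser : PowerSeries ℚ := PowerSeries.rescale (-1) (PowerSeries.exp ℚ)

lemma exp_mul_Nser : PowerSeries.exp ℚ * Nser = 1 := PowerSeries.exp_mul_exp_neg_eq_one

lemma coeff_Nser (n : ℕ) : PowerSeries.coeff (R := ℚ) n Nser = (-1)^n * (1 / n.factorial) := by
  simp [Nser, PowerSeries.coeff_rescale, PowerSeries.coeff_exp]

lemma constantCoeff_Nser : PowerSeries.constantCoeff (R := ℚ) Nser = 1 := by
  simpa using coeff_Nser 0

lemma derivative_Nser : d⁄dX ℚ Nser = -Nser := by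
  ext n
  rw [PowerSeries.coeff_derivative, map_neg, coeff_Nser, coeff_Nser]
  have h : ((n+1).factorial : ℚ) = (n+1) * n.factorial := by
    push_cast [Nat.factorial_succ]; ring
  have h1 : (n.factorial : ℚ) ≠ 0 := by positivity
  have h2 : ((n:ℚ)+1) ≠ 0 := by positivity
  rw [pow_succ, h]
  field_simp

section
variable (T : PowerSeries ℚ) (hT : T * (1 - Nser) = PowerSeries.X)

lemma deriv_rel (hT : T * (1 - Nser) = PowerSeries.X) :
    T * Nser + (1 - Nser) * d⁄dX ℚ T = 1 := by
  have h := congrArg (d⁄dX ℚ) hT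
  rw [Derivation.leibniz, PowerSeries.derivative_X, map_sub, derivative_Nser, Derivation.map_one_eq_zero] at h
  rw [smul_eq_mul, smul_eq_mul] at h
  linear_combination h

lemma constantCoeff_T (hT : T * (1 - Nser) = PowerSeries.X) :
    PowerSeries.constantCoeff (R := ℚ) T = 1 := by
  have h := congrArg (PowerSeries.constantCoeff (R := ℚ)) (deriv_rel T hT)
  simpa [constantCoeff_Nser] using h

lemma keyA (hT : T * (1 - Nser) = PowerSeries.X) (k : ℕ) :
    PowerSeries.coeff (R := ℚ) (k+1) (Nser * T ^ (k+2)) = 0 := by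
  have h1 := deriv_rel T hT
  have hrel : Nser * T ^ (k+2) = T ^ (k+1) - PowerSeries.X * (T ^ k * d⁄dX ℚ T) := by
    linear_combination (T ^ (k+1)) * h1 - (T ^ k * d⁄dX ℚ T) * hT
  have hd : d⁄dX ℚ (T ^ (k+1)) = (k+1) • T ^ k • d⁄dX ℚ T := by
    have := Derivation.leibniz_pow (d⁄dX ℚ) T (n := k + 1)
    simpa only [Nat.add_sub_cancel] using this
  have hc : PowerSeries.coeff (R := ℚ) k (T ^ k * d⁄dX ℚ T) = PowerSeries.coeff (R := ℚ) (k+1) (T ^ (k+1)) := by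
    have h2 := congrArg (PowerSeries.coeff (R := ℚ) k) hd
    rw [PowerSeries.coeff_derivative] at h2
    simp only [smul_eq_mul, map_nsmul, nsmul_eq_mul] at h2
    have hk : ((k:ℚ)+1) ≠ 0 := by positivity
    push_cast at h2
    rw [show ((k : ℚ⟦X⟧) + 1) = PowerSeries.C (R := ℚ) ((k:ℚ)+1) by simp, PowerSeries.coeff_C_mul] at h2
    exact mul_left_cancel₀ hk (by linear_combination -h2)
  rw [hrel, map_sub, PowerSeries.coeff_succ_X_mul, hc, sub_self]


lemma lemC (hT : T * (1 - Nser) = PowerSeries.X) :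
    ∀ m q, PowerSeries.coeff (R := ℚ) m (PowerSeries.exp ℚ ^ q * (Nser * T ^ (m+1)))
      = PowerSeries.coeff (R := ℚ) m (((1 - PowerSeries.X : PowerSeries ℚ)⁻¹) ^ q) := by
  have hA : (1 - PowerSeries.X : PowerSeries ℚ) * (1 - PowerSeries.X)⁻¹ = 1 :=
    PowerSeries.mul_inv_cancel _ (by simp)
  have hCA : PowerSeries.constantCoeff (R := ℚ) ((1 - PowerSeries.X : PowerSeries ℚ)⁻¹) = 1 := by
    rw [PowerSeries.constantCoeff_inv]; simp
  have hE1 : PowerSeries.exp ℚ = 1 + (1 - Nser) * PowerSeries.exp ℚ := by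
    linear_combination exp_mul_Nser
  have hfT : (1 - Nser) * T = PowerSeries.X := by rw [mul_comm]; exact hT
  intro m
  induction m with
  | zero =>
    intro q
    simp only [PowerSeries.coeff_zero_eq_constantCoeff, map_mul, map_pow,
      PowerSeries.constantCoeff_exp, constantCoeff_Nser, zero_add, pow_one,
      constantCoeff_T T hT, hCA, one_pow, one_mul, mul_one]
  | succ m ih =>
    intro q
    induction q with
    | zero => simpa using keyA T hT m
    | succ q ihq =>
      have hsplit : PowerSeries.exp ℚ ^ (q+1) * (Nser * T ^ (m+2))
          = PowerSeries.exp ℚ ^ q * (Nser * T ^ (m+2))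
            + PowerSeries.X * (PowerSeries.exp ℚ ^ (q+1) * (Nser * T ^ (m+1))) := by
        linear_combination (PowerSeries.exp ℚ ^ q * Nser * T ^ (m+2)) * hE1
          + (PowerSeries.exp ℚ ^ (q+1) * Nser * T ^ (m+1)) * hfT
      have hArec : ((1 - PowerSeries.X : PowerSeries ℚ)⁻¹) ^ (q+1)
          = ((1 - PowerSeries.X)⁻¹) ^ q
            + PowerSeries.X * ((1 - PowerSeries.X)⁻¹) ^ (q+1) := by
        linear_combination (((1 - PowerSeries.X : PowerSeries ℚ)⁻¹) ^ q) * hA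
      rw [hsplit, map_add, PowerSeries.coeff_succ_X_mul, ihq, ih (q+1)]
      conv_rhs => rw [hArec, map_add, PowerSeries.coeff_succ_X_mul]

lemma keyD (hT : T * (1 - Nser) = PowerSeries.X) (k d p : ℕ) :
    PowerSeries.coeff (R := ℚ) (d + k)
      ((1 - Nser) ^ k * (PowerSeries.exp ℚ ^ (p+1) * (Nser * T ^ (d + k + 1))))
      = PowerSeries.coeff (R := ℚ) (d + k)
        ((PowerSeries.X : PowerSeries ℚ) ^ k * ((1 - PowerSeries.X)⁻¹) ^ (p+1)) := by
  have hfT : (1 - Nser) * T = PowerSeries.X := by rw [mul_comm]; exact hT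
  have hXk : (1 - Nser) ^ k * T ^ k = PowerSeries.X ^ k := by rw [← mul_pow, hfT]
  have hrw : (1 - Nser) ^ k * (PowerSeries.exp ℚ ^ (p+1) * (Nser * T ^ (d + k + 1)))
      = PowerSeries.X ^ k * (PowerSeries.exp ℚ ^ (p+1) * (Nser * T ^ (d + 1))) := by
    linear_combination (PowerSeries.exp ℚ ^ (p+1) * Nser * T ^ (d+1)) * hXk
  rw [hrw, PowerSeries.coeff_X_pow_mul, PowerSeries.coeff_X_pow_mul, lemC T hT d (p+1)]

end

/-- Let `r ≥ 1`, `s ≥ 0`, `p ≥ 0`, `b ≥ 1` be integers.  Then in `ℚ[[x]]` the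
coefficient of `x^(r+s-1)` in `e^(p·x) · T(x)^r · (T(x) + (b-1)·x)^s`, where `T`
is the Todd power series (the unique power series with `T(x)·(1 - e^(-x)) = x`),
equals the coefficient of `x^(r+s-1)` in `(1 + (b-1)·x)^s · (1-x)^(-(p+1))`,
where `(1-x)⁻¹` is the multiplicative inverse of `1 - x` in `ℚ[[x]]`. -/
theorem coeff_todd_change_of_variables (r s p b : ℕ) (hr : 1 ≤ r) (hb : 1 ≤ b)
    (T : PowerSeries ℚ)
    (hT : T * (1 - PowerSeries.rescale (-1) (PowerSeries.exp ℚ)) = PowerSeries.X) :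
    PowerSeries.coeff (R := ℚ) (r + s - 1)
      ((PowerSeries.exp ℚ) ^ p * T ^ r * (T + ((b : ℚ) - 1) • PowerSeries.X) ^ s) =
    PowerSeries.coeff (R := ℚ) (r + s - 1)
      ((1 + ((b : ℚ) - 1) • PowerSeries.X) ^ s * ((1 - PowerSeries.X)⁻¹) ^ (p + 1)) := by
  rw [show PowerSeries.rescale (-1) (PowerSeries.exp ℚ) = Nser from rfl] at hT
  set c : ℚ := (b : ℚ) - 1 with hc
  obtain ⟨m, hm⟩ : ∃ m, r + s = m + 1 := ⟨r + s - 1, by omega⟩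
  have hm' : r + s - 1 = m := by omega
  have hsm : s ≤ m := by omega
  rw [hm']
  -- rewrite the LHS series
  have h1 : T + c • PowerSeries.X = T * (1 + c • (1 - Nser)) := by
    rw [mul_add, mul_one, mul_smul_comm, hT]
  have h2 : PowerSeries.exp ℚ ^ p * T ^ r * (T + c • PowerSeries.X) ^ s
      = (1 + c • (1 - Nser)) ^ s * (PowerSeries.exp ℚ ^ (p+1) * (Nser * T ^ (m+1))) := by
    rw [h1, mul_pow, ← hm]
    have hEp : PowerSeries.exp ℚ ^ p = PowerSeries.exp ℚ ^ (p+1) * Nser := by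
      rw [pow_succ, mul_assoc, exp_mul_Nser, mul_one]
    rw [hEp, pow_add]
    ring
  rw [h2]
  -- binomial expansion on both sides
  have expand : ∀ g : PowerSeries ℚ, (1 + c • g) ^ s
      = ∑ k ∈ Finset.range (s+1), (c • g) ^ k * (s.choose k : PowerSeries ℚ) := by
    intro g
    rw [add_comm, add_pow]
    simp
  rw [expand, expand, Finset.sum_mul, Finset.sum_mul, map_sum, map_sum]
  refine Finset.sum_congr rfl fun k hk => ?_
  have hks : k ≤ s := by simpa [Nat.lt_succ_iff] using hk
  obtain ⟨d, hd⟩ : ∃ d, m = d + k := ⟨m - k, by omega⟩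
  subst hd
  have hcast : (s.choose k : PowerSeries ℚ) = PowerSeries.C (R := ℚ) (s.choose k : ℚ) := by simp
  rw [smul_pow, smul_pow, hcast]
  rw [smul_mul_assoc, smul_mul_assoc, smul_mul_assoc, smul_mul_assoc, map_smul, map_smul]
  congr 1
  rw [mul_comm ((1 - Nser) ^ k) (PowerSeries.C (R := ℚ) _), mul_comm ((PowerSeries.X : PowerSeries ℚ) ^ k) (PowerSeries.C (R := ℚ) _),
    mul_assoc, mul_assoc, PowerSeries.coeff_C_mul, PowerSeries.coeff_C_mul]
  congr 1
  exact keyD T hT k d p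
end

section
/- Let ℓ, m ≥ 0 be integers with ℓ + m = g. Then in the exterior algebra Λ(V) one has θ^ℓ ∧ η^{2m} ∧ (θ′)^{g−m} = (−1)^m · (ℓ! · (2m)! · g! / m!) · Ω ∧ Ω′. (This is the wedge-product form of the push-forward identity (p₂)_*(θ_N^ℓ η^{2m}) = (ℓ!(2m)!/m!)(−θ_d)^m used in the Grothendieck–Riemann–Roch computation.) -/
/-! Let `V` be the free `ℚ`-module with basis `a₁,…,a_g, b₁,…,b_g, a′₁,…,a′_g, b′₁,…,b′_g`,
realized as `(Fin 4 × Fin g) → ℚ` where the first index `0,1,2,3` selects the family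
`a, b, a′, b′` respectively. -/

/-- The basis generators `a i = gen g 0 i`, `b i = gen g 1 i`, `a′ i = gen g 2 i`,
`b′ i = gen g 3 i` inside the exterior algebra `Λ(V)`. -/
noncomputable def gen (g : ℕ) (j : Fin 4) (i : Fin g) :
    ExteriorAlgebra ℚ ((Fin 4 × Fin g) → ℚ) :=
  ExteriorAlgebra.ι ℚ (Pi.single (j, i) 1)

/-- `θ = Σᵢ aᵢ ∧ bᵢ`. -/
noncomputable def theta (g : ℕ) : ExteriorAlgebra ℚ ((Fin 4 × Fin g) → ℚ) :=
  ∑ i : Fin g, gen g 0 i * gen g 1 i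

/-- `θ′ = Σᵢ a′ᵢ ∧ b′ᵢ`. -/
noncomputable def theta' (g : ℕ) : ExteriorAlgebra ℚ ((Fin 4 × Fin g) → ℚ) :=
  ∑ i : Fin g, gen g 2 i * gen g 3 i

/-- `η = Σᵢ (aᵢ ∧ b′ᵢ + a′ᵢ ∧ bᵢ)`. -/
noncomputable def eta (g : ℕ) : ExteriorAlgebra ℚ ((Fin 4 × Fin g) → ℚ) :=
  ∑ i : Fin g, (gen g 0 i * gen g 3 i + gen g 2 i * gen g 1 i)

/-- `Ω = a₁ ∧ b₁ ∧ ⋯ ∧ a_g ∧ b_g`. -/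
noncomputable def Omega (g : ℕ) : ExteriorAlgebra ℚ ((Fin 4 × Fin g) → ℚ) :=
  ((List.finRange g).map (fun i => gen g 0 i * gen g 1 i)).prod

/-- `Ω′ = a′₁ ∧ b′₁ ∧ ⋯ ∧ a′_g ∧ b′_g`. -/
noncomputable def Omega' (g : ℕ) : ExteriorAlgebra ℚ ((Fin 4 × Fin g) → ℚ) :=
  ((List.finRange g).map (fun i => gen g 2 i * gen g 3 i)).prod

open Finset in
private lemma prodZero {Rc : Type*} [CommRing Rc] {ιt : Type*} [DecidableEq ιt]
    {s t : Finset ιt} {f f' : ιt → Rc} {i : ιt} (hs : i ∈ s) (ht : i ∈ t)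
    (h0 : f i * f' i = 0) : (∏ j ∈ s, f j) * (∏ j ∈ t, f' j) = 0 := by
  rw [← Finset.mul_prod_erase s f hs, ← Finset.mul_prod_erase t f' ht,
    mul_mul_mul_comm, h0, zero_mul]

private lemma sum_pow_of_sq_zero {Rc : Type*} [CommRing Rc] {ιt : Type*} [DecidableEq ιt]
    (u : Finset ιt) (x : ιt → Rc) (hx : ∀ i ∈ u, x i * x i = 0) (n : ℕ) :
    (∑ i ∈ u, x i) ^ n = (n.factorial : Rc) * ∑ S ∈ u.powersetCard n, ∏ i ∈ S, x i := by
  induction n with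
  | zero => simp
  | succ n ih =>
    have key : (∑ i ∈ u, x i) * ∑ S ∈ u.powersetCard n, ∏ i ∈ S, x i
        = ((n : Rc) + 1) * ∑ S ∈ u.powersetCard (n + 1), ∏ i ∈ S, x i := by
      rw [Finset.sum_mul_sum]
      calc ∑ i ∈ u, ∑ S ∈ u.powersetCard n, x i * ∏ j ∈ S, x j
          = ∑ i ∈ u, ∑ S ∈ (u.powersetCard n).filter (fun S => i ∉ S),
              ∏ j ∈ insert i S, x j := by
            refine Finset.sum_congr rfl fun i hi => ?_
            rw [Finset.sum_filter]
            refine Finset.sum_congr rfl fun S hS => ?_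
            by_cases hiS : i ∈ S
            · rw [if_neg (by simp [hiS]), ← Finset.mul_prod_erase S x hiS, ← mul_assoc,
                hx i hi, zero_mul]
            · rw [if_pos hiS, Finset.prod_insert hiS]
        _ = ∑ p ∈ u.sigma (fun i => (u.powersetCard n).filter (fun S => i ∉ S)),
              ∏ j ∈ insert p.1 p.2, x j := Finset.sum_sigma' u _ _
        _ = ∑ p ∈ ((u.powersetCard (n+1)).sigma (fun S => S)),
              ∏ j ∈ p.1, x j := by
            refine Finset.sum_bij' (fun p _ => (⟨insert p.1 p.2, p.1⟩ : Σ _ : Finset ιt, ιt))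
              (fun p _ => (⟨p.2, p.1.erase p.2⟩ : Σ _ : ιt, Finset ιt)) ?_ ?_ ?_ ?_ ?_
            · rintro ⟨i, S⟩ hp
              simp only [Finset.mem_sigma, Finset.mem_filter, Finset.mem_powersetCard] at hp ⊢
              obtain ⟨hiu, ⟨hsub, hcard⟩, hnot⟩ := hp
              exact ⟨⟨Finset.insert_subset hiu hsub,
                by rw [Finset.card_insert_of_notMem hnot, hcard]⟩, Finset.mem_insert_self _ _⟩
            · rintro ⟨S, i⟩ hp
              simp only [Finset.mem_sigma, Finset.mem_powersetCard, Finset.mem_filter] at hp ⊢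
              obtain ⟨⟨hsub, hcard⟩, hi⟩ := hp
              refine ⟨hsub hi, ⟨(Finset.erase_subset _ _).trans hsub, ?_⟩,
                Finset.notMem_erase _ _⟩
              rw [Finset.card_erase_of_mem hi, hcard]
              omega
            · rintro ⟨i, S⟩ hp
              simp only [Finset.mem_sigma, Finset.mem_filter] at hp
              simp [Finset.erase_insert hp.2.2]
            · rintro ⟨S, i⟩ hp
              simp only [Finset.mem_sigma] at hp
              simp [Finset.insert_erase hp.2]
            · exact fun p _ => rfl
        _ = ((n : Rc) + 1) * ∑ S ∈ u.powersetCard (n + 1), ∏ i ∈ S, x i := by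
            rw [Finset.sum_sigma, Finset.mul_sum]
            refine Finset.sum_congr rfl fun S hS => ?_
            rw [show (∑ s ∈ S, ∏ j ∈ (⟨S, s⟩ : Σ _ : Finset ιt, ιt).1, x j)
                = ∑ _s ∈ S, ∏ j ∈ S, x j from rfl]
            rw [Finset.sum_const, nsmul_eq_mul, (Finset.mem_powersetCard.1 hS).2]
            push_cast
            ring
    rw [pow_succ, ih, mul_assoc, mul_comm (∑ S ∈ u.powersetCard n, ∏ i ∈ S, x i)
      (∑ i ∈ u, x i), key, Nat.factorial_succ]
    push_cast
    ring

section Generic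

open Finset

variable {Rc : Type*} [CommRing Rc] {g ℓ m : ℕ}

private lemma term_eq (h : ℓ + m = g) {k : ℕ}
    {t t' p q : Fin g → Rc}
    (htp : ∀ i, t i * p i = 0) (htq : ∀ i, t i * q i = 0)
    (hpt' : ∀ i, p i * t' i = 0) (hqt' : ∀ i, q i * t' i = 0)
    (hpq : ∀ i, p i * q i = -(t i * t' i))
    {S A B S' : Finset (Fin g)}
    (hS : S ∈ powersetCard ℓ univ)
    (hA : A ∈ powersetCard k univ)
    (hB : B ∈ powersetCard (2 * m - k) univ)
    (hS' : S' ∈ powersetCard ℓ univ) (hk : k ≤ 2 * m) :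
    (∏ i ∈ S, t i) * (∏ i ∈ A, p i) * (∏ i ∈ B, q i) * (∏ i ∈ S', t' i)
      = if S' = S ∧ B = Sᶜ ∧ A = Sᶜ then (-1 : Rc) ^ m * ∏ i, (t i * t' i) else 0 := by
  have cS : S.card = ℓ := (Finset.mem_powersetCard.1 hS).2
  have cA : A.card = k := (Finset.mem_powersetCard.1 hA).2
  have cB : B.card = 2 * m - k := (Finset.mem_powersetCard.1 hB).2
  have cS' : S'.card = ℓ := (Finset.mem_powersetCard.1 hS').2
  by_cases hSA : Disjoint S A
  · by_cases hSB : Disjoint S B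
    · by_cases hS'A : Disjoint S' A
      · by_cases hS'B : Disjoint S' B
        · -- all disjoint: forced configuration
          have hcard_le : ∀ u v : Finset (Fin g), Disjoint u v → u.card + v.card ≤ g := by
            intro u v huv
            rw [← Finset.card_union_of_disjoint huv]
            calc (u ∪ v).card ≤ Finset.univ.card := Finset.card_le_univ _
              _ = g := by rw [Finset.card_univ, Fintype.card_fin]
          have h1 : ℓ + k ≤ g := by rw [← cS, ← cA]; exact hcard_le _ _ hSA
          have h2 : ℓ + (2 * m - k) ≤ g := by rw [← cS, ← cB]; exact hcard_le _ _ hSB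
          have hkm : k = m := by omega
          have huniv : ∀ u v : Finset (Fin g), Disjoint u v → u.card + v.card = g →
              v = uᶜ := by
            intro u v huv hcard
            refine eq_compl_iff_isCompl.2 ⟨huv.symm, codisjoint_iff.2 ?_⟩
            rw [Finset.sup_eq_union, Finset.union_comm, Finset.top_eq_univ]
            exact Finset.eq_univ_of_card _ (by
              rw [Finset.card_union_of_disjoint huv, hcard, Fintype.card_fin])
          have hAS : A = Sᶜ := huniv S A hSA (by omega)
          have hBS : B = Sᶜ := huniv S B hSB (by omega)
          have hS'S : S' = S := by
            have : A = S'ᶜ := huniv S' A hS'A (by omega)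
            have h3 : S'ᶜ = Sᶜ := by rw [← this, hAS]
            have := congrArg (·ᶜ) h3
            simpa using this
          rw [if_pos ⟨hS'S, hBS, hAS⟩, hS'S, hBS, hAS]
          have hcc : Sᶜ.card = m := by rw [Finset.card_compl, Fintype.card_fin, cS]; omega
          calc (∏ i ∈ S, t i) * (∏ i ∈ Sᶜ, p i) * (∏ i ∈ Sᶜ, q i) * (∏ i ∈ S, t' i)
              = ((∏ i ∈ S, t i) * (∏ i ∈ S, t' i))
                  * ((∏ i ∈ Sᶜ, p i) * (∏ i ∈ Sᶜ, q i)) := by ring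
            _ = (∏ i ∈ S, t i * t' i) * (∏ i ∈ Sᶜ, p i * q i) := by
                rw [Finset.prod_mul_distrib, Finset.prod_mul_distrib]
            _ = (∏ i ∈ S, t i * t' i) * (∏ i ∈ Sᶜ, (-1 : Rc) * (t i * t' i)) := by
                refine congrArg _ (Finset.prod_congr rfl fun i _ => ?_)
                rw [hpq i]; ring
            _ = (∏ i ∈ S, t i * t' i) * ((-1 : Rc) ^ m * ∏ i ∈ Sᶜ, (t i * t' i)) := by
                rw [show (∏ i ∈ Sᶜ, (-1 : Rc) * (t i * t' i))
                    = (-1 : Rc) ^ m * ∏ i ∈ Sᶜ, (t i * t' i) from by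
                  rw [Finset.prod_mul_distrib, Finset.prod_const, hcc]]
            _ = (-1 : Rc) ^ m * ((∏ i ∈ S, t i * t' i) * ∏ i ∈ Sᶜ, (t i * t' i)) := by ring
            _ = (-1 : Rc) ^ m * ∏ i, (t i * t' i) := by rw [Finset.prod_mul_prod_compl]
        · obtain ⟨i, hi1, hi2⟩ := Finset.not_disjoint_iff.1 hS'B
          rw [if_neg (fun hc => hS'B (by rw [hc.1, hc.2.1]; exact disjoint_compl_right)),
            show (∏ i ∈ S, t i) * (∏ i ∈ A, p i) * (∏ i ∈ B, q i) * (∏ i ∈ S', t' i)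
              = ((∏ i ∈ B, q i) * (∏ i ∈ S', t' i)) * ((∏ i ∈ S, t i) * (∏ i ∈ A, p i))
              from by ring, prodZero hi2 hi1 (hqt' i), zero_mul]
      · obtain ⟨i, hi1, hi2⟩ := Finset.not_disjoint_iff.1 hS'A
        rw [if_neg (fun hc => hS'A (by rw [hc.1, hc.2.2]; exact disjoint_compl_right)),
          show (∏ i ∈ S, t i) * (∏ i ∈ A, p i) * (∏ i ∈ B, q i) * (∏ i ∈ S', t' i)
            = ((∏ i ∈ A, p i) * (∏ i ∈ S', t' i)) * ((∏ i ∈ S, t i) * (∏ i ∈ B, q i))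
            from by ring, prodZero hi2 hi1 (hpt' i), zero_mul]
    · obtain ⟨i, hi1, hi2⟩ := Finset.not_disjoint_iff.1 hSB
      rw [if_neg (fun hc => hSB (by rw [hc.2.1]; exact disjoint_compl_right)),
        show (∏ i ∈ S, t i) * (∏ i ∈ A, p i) * (∏ i ∈ B, q i) * (∏ i ∈ S', t' i)
          = ((∏ i ∈ S, t i) * (∏ i ∈ B, q i)) * ((∏ i ∈ A, p i) * (∏ i ∈ S', t' i))
          from by ring, prodZero hi1 hi2 (htq i), zero_mul]
  · obtain ⟨i, hi1, hi2⟩ := Finset.not_disjoint_iff.1 hSA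
    rw [if_neg (fun hc => hSA (by rw [hc.2.2]; exact disjoint_compl_right)),
      show (∏ i ∈ S, t i) * (∏ i ∈ A, p i) * (∏ i ∈ B, q i) * (∏ i ∈ S', t' i)
        = ((∏ i ∈ S, t i) * (∏ i ∈ A, p i)) * ((∏ i ∈ B, q i) * (∏ i ∈ S', t' i))
        from by ring, prodZero hi1 hi2 (htp i), zero_mul]

private lemma innerSumAux37 (h : ℓ + m = g) {k : ℕ}
    {t t' p q : Fin g → Rc}
    (htp : ∀ i, t i * p i = 0) (htq : ∀ i, t i * q i = 0)
    (hpt' : ∀ i, p i * t' i = 0) (hqt' : ∀ i, q i * t' i = 0)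
    (hpq : ∀ i, p i * q i = -(t i * t' i))
    {S : Finset (Fin g)} (hS : S ∈ powersetCard ℓ univ) (hk : k ≤ 2 * m) :
    ∑ A ∈ powersetCard k univ, ∑ B ∈ powersetCard (2 * m - k) univ,
      ∑ S' ∈ powersetCard ℓ univ,
        (∏ i ∈ S, t i) * (∏ i ∈ A, p i) * (∏ i ∈ B, q i) * (∏ i ∈ S', t' i)
      = if k = m then (-1 : Rc) ^ m * ∏ i, (t i * t' i) else 0 := by
  have cS : S.card = ℓ := (Finset.mem_powersetCard.1 hS).2
  have hstep : ∀ A ∈ powersetCard k (univ : Finset (Fin g)),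
      ∀ B ∈ powersetCard (2 * m - k) (univ : Finset (Fin g)),
      (∑ S' ∈ powersetCard ℓ univ,
        (∏ i ∈ S, t i) * (∏ i ∈ A, p i) * (∏ i ∈ B, q i) * (∏ i ∈ S', t' i))
      = if B = Sᶜ ∧ A = Sᶜ then (-1 : Rc) ^ m * ∏ i, (t i * t' i) else 0 := by
    intro A hA B hB
    rw [Finset.sum_congr rfl
      (fun S' hS' => term_eq h htp htq hpt' hqt' hpq hS hA hB hS' hk)]
    simp only [ite_and]
    rw [Finset.sum_ite_eq' (powersetCard ℓ univ) S, if_pos hS]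
  rw [Finset.sum_congr rfl (fun A hA => Finset.sum_congr rfl (fun B hB => hstep A hA B hB))]
  by_cases hkm : k = m
  · subst hkm
    have hSc : Sᶜ ∈ powersetCard (2 * k - k) (univ : Finset (Fin g)) :=
      Finset.mem_powersetCard.2 ⟨Finset.subset_univ _,
        by rw [Finset.card_compl, Fintype.card_fin, cS]; omega⟩
    have hSc' : Sᶜ ∈ powersetCard k (univ : Finset (Fin g)) :=
      Finset.mem_powersetCard.2 ⟨Finset.subset_univ _,
        by rw [Finset.card_compl, Fintype.card_fin, cS]; omega⟩
    rw [if_pos rfl]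
    calc ∑ A ∈ powersetCard k (univ : Finset (Fin g)),
            ∑ B ∈ powersetCard (2 * k - k) (univ : Finset (Fin g)),
              (if B = Sᶜ ∧ A = Sᶜ then (-1 : Rc) ^ k * ∏ i, (t i * t' i) else 0)
        = ∑ A ∈ powersetCard k (univ : Finset (Fin g)),
            (if A = Sᶜ then (-1 : Rc) ^ k * ∏ i, (t i * t' i) else 0) := by
          refine Finset.sum_congr rfl fun A hA => ?_
          simp only [ite_and]
          rw [Finset.sum_ite_eq' (powersetCard (2 * k - k) univ) Sᶜ, if_pos hSc]
      _ = (-1 : Rc) ^ k * ∏ i, (t i * t' i) := by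
          rw [Finset.sum_ite_eq' (powersetCard k univ) Sᶜ, if_pos hSc']
  · rw [if_neg hkm]
    refine Finset.sum_eq_zero fun A hA => Finset.sum_eq_zero fun B hB => ?_
    rw [if_neg]
    rintro ⟨-, hAe⟩
    apply hkm
    have : A.card = k := (Finset.mem_powersetCard.1 hA).2
    rw [hAe, Finset.card_compl, Fintype.card_fin, cS] at this
    omega

private lemma genericMainAux37 (h : ℓ + m = g)
    (t t' p q : Fin g → Rc)
    (ht : ∀ i, t i * t i = 0) (ht' : ∀ i, t' i * t' i = 0)
    (hp : ∀ i, p i * p i = 0) (hq : ∀ i, q i * q i = 0)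
    (htp : ∀ i, t i * p i = 0) (htq : ∀ i, t i * q i = 0)
    (hpt' : ∀ i, p i * t' i = 0) (hqt' : ∀ i, q i * t' i = 0)
    (hpq : ∀ i, p i * q i = -(t i * t' i)) :
    (∑ i, t i) ^ ℓ * ((∑ i, p i) + (∑ i, q i)) ^ (2 * m) * (∑ i, t' i) ^ ℓ
      = ((ℓ.factorial * ℓ.factorial * (2 * m).factorial * g.choose ℓ : ℕ) : Rc)
          * ((-1 : Rc) ^ m * ∏ i, (t i * t' i)) := by
  have hθ := sum_pow_of_sq_zero Finset.univ t (fun i _ => ht i) ℓ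
  have hθ' := sum_pow_of_sq_zero Finset.univ t' (fun i _ => ht' i) ℓ
  have hη : ((∑ i, p i) + (∑ i, q i)) ^ (2 * m)
      = ((2 * m).factorial : Rc) * ∑ k ∈ Finset.range (2 * m + 1),
          (∑ A ∈ powersetCard k univ, ∏ i ∈ A, p i)
          * (∑ B ∈ powersetCard (2 * m - k) univ, ∏ i ∈ B, q i) := by
    rw [add_pow, Finset.mul_sum]
    refine Finset.sum_congr rfl fun k hk => ?_
    have hk' : k ≤ 2 * m := by have := Finset.mem_range.1 hk; omega
    rw [sum_pow_of_sq_zero Finset.univ p (fun i _ => hp i) k,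
      sum_pow_of_sq_zero Finset.univ q (fun i _ => hq i) (2 * m - k)]
    have hfac : ((2 * m).choose k * k.factorial * (2 * m - k).factorial : ℕ)
        = (2 * m).factorial := Nat.choose_mul_factorial_mul_factorial hk'
    calc ((k.factorial : Rc) * ∑ A ∈ powersetCard k univ, ∏ i ∈ A, p i)
          * (((2 * m - k).factorial : Rc)
              * ∑ B ∈ powersetCard (2 * m - k) univ, ∏ i ∈ B, q i)
          * ((2 * m).choose k : Rc)
        = (((2 * m).choose k * k.factorial * (2 * m - k).factorial : ℕ) : Rc)
            * ((∑ A ∈ powersetCard k univ, ∏ i ∈ A, p i)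
              * (∑ B ∈ powersetCard (2 * m - k) univ, ∏ i ∈ B, q i)) := by
          push_cast; ring
      _ = ((2 * m).factorial : Rc)
            * ((∑ A ∈ powersetCard k univ, ∏ i ∈ A, p i)
              * (∑ B ∈ powersetCard (2 * m - k) univ, ∏ i ∈ B, q i)) := by
          rw [hfac]
  rw [hθ, hη, hθ']
  have core : (∑ S ∈ powersetCard ℓ (univ : Finset (Fin g)), ∏ i ∈ S, t i)
      * (∑ k ∈ Finset.range (2 * m + 1),
          (∑ A ∈ powersetCard k univ, ∏ i ∈ A, p i)
          * (∑ B ∈ powersetCard (2 * m - k) univ, ∏ i ∈ B, q i))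
      * (∑ S' ∈ powersetCard ℓ (univ : Finset (Fin g)), ∏ i ∈ S', t' i)
      = ((g.choose ℓ : ℕ) : Rc) * ((-1 : Rc) ^ m * ∏ i, (t i * t' i)) := by
    have expand : ∀ S ∈ powersetCard ℓ (univ : Finset (Fin g)),
        (∏ i ∈ S, t i)
          * (∑ k ∈ Finset.range (2 * m + 1),
              (∑ A ∈ powersetCard k univ, ∏ i ∈ A, p i)
              * (∑ B ∈ powersetCard (2 * m - k) univ, ∏ i ∈ B, q i))
          * (∑ S' ∈ powersetCard ℓ (univ : Finset (Fin g)), ∏ i ∈ S', t' i)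
        = (-1 : Rc) ^ m * ∏ i, (t i * t' i) := by
      intro S hS
      calc (∏ i ∈ S, t i)
            * (∑ k ∈ Finset.range (2 * m + 1),
                (∑ A ∈ powersetCard k univ, ∏ i ∈ A, p i)
                * (∑ B ∈ powersetCard (2 * m - k) univ, ∏ i ∈ B, q i))
            * (∑ S' ∈ powersetCard ℓ (univ : Finset (Fin g)), ∏ i ∈ S', t' i)
          = ∑ k ∈ Finset.range (2 * m + 1), ∑ A ∈ powersetCard k univ,
              ∑ B ∈ powersetCard (2 * m - k) univ, ∑ S' ∈ powersetCard ℓ univ,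
                (∏ i ∈ S, t i) * (∏ i ∈ A, p i) * (∏ i ∈ B, q i) * (∏ i ∈ S', t' i) := by
            rw [Finset.mul_sum (Finset.range (2 * m + 1)) _ (∏ i ∈ S, t i),
              Finset.sum_mul (Finset.range (2 * m + 1)) _
                (∑ S' ∈ powersetCard ℓ (univ : Finset (Fin g)), ∏ i ∈ S', t' i)]
            refine Finset.sum_congr rfl fun k hk => ?_
            rw [Finset.sum_mul_sum (powersetCard k (univ : Finset (Fin g)))
                (powersetCard (2 * m - k) (univ : Finset (Fin g))),
              Finset.mul_sum (powersetCard k (univ : Finset (Fin g))) _ (∏ i ∈ S, t i),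
              Finset.sum_mul (powersetCard k (univ : Finset (Fin g))) _
                (∑ S' ∈ powersetCard ℓ (univ : Finset (Fin g)), ∏ i ∈ S', t' i)]
            refine Finset.sum_congr rfl fun A hA => ?_
            rw [Finset.mul_sum (powersetCard (2 * m - k) (univ : Finset (Fin g))) _
                (∏ i ∈ S, t i),
              Finset.sum_mul (powersetCard (2 * m - k) (univ : Finset (Fin g))) _
                (∑ S' ∈ powersetCard ℓ (univ : Finset (Fin g)), ∏ i ∈ S', t' i)]
            refine Finset.sum_congr rfl fun B hB => ?_
            rw [Finset.mul_sum (powersetCard ℓ (univ : Finset (Fin g))) _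
                ((∏ i ∈ S, t i) * ((∏ i ∈ A, p i) * (∏ i ∈ B, q i)))]
            exact Finset.sum_congr rfl fun S' hS' => by ring
        _ = ∑ k ∈ Finset.range (2 * m + 1),
              (if k = m then (-1 : Rc) ^ m * ∏ i, (t i * t' i) else 0) := by
            refine Finset.sum_congr rfl fun k hk => ?_
            exact innerSumAux37 h htp htq hpt' hqt' hpq hS
              (by have := Finset.mem_range.1 hk; omega)
        _ = (-1 : Rc) ^ m * ∏ i, (t i * t' i) := by
            rw [Finset.sum_ite_eq' (Finset.range (2 * m + 1)) m,
              if_pos (Finset.mem_range.2 (by omega))]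
    rw [Finset.sum_mul, Finset.sum_mul]
    rw [Finset.sum_congr rfl expand, Finset.sum_const, nsmul_eq_mul,
      Finset.card_powersetCard, Finset.card_univ, Fintype.card_fin]
  calc ((ℓ.factorial : Rc) * ∑ S ∈ powersetCard ℓ univ, ∏ i ∈ S, t i)
        * (((2 * m).factorial : Rc) * ∑ k ∈ Finset.range (2 * m + 1),
            (∑ A ∈ powersetCard k univ, ∏ i ∈ A, p i)
            * (∑ B ∈ powersetCard (2 * m - k) univ, ∏ i ∈ B, q i))
        * ((ℓ.factorial : Rc) * ∑ S' ∈ powersetCard ℓ univ, ∏ i ∈ S', t' i)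
      = ((ℓ.factorial : Rc) * (ℓ.factorial : Rc) * ((2 * m).factorial : Rc))
          * ((∑ S ∈ powersetCard ℓ (univ : Finset (Fin g)), ∏ i ∈ S, t i)
            * (∑ k ∈ Finset.range (2 * m + 1),
                (∑ A ∈ powersetCard k univ, ∏ i ∈ A, p i)
                * (∑ B ∈ powersetCard (2 * m - k) univ, ∏ i ∈ B, q i))
            * (∑ S' ∈ powersetCard ℓ (univ : Finset (Fin g)), ∏ i ∈ S', t' i)) := by
        ring
    _ = ((ℓ.factorial * ℓ.factorial * (2 * m).factorial * g.choose ℓ : ℕ) : Rc)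
          * ((-1 : Rc) ^ m * ∏ i, (t i * t' i)) := by
        rw [core]; push_cast; ring

end Generic

section Ext

open ExteriorAlgebra

variable {g : ℕ}

private lemma iaAux (x y : (Fin 4 × Fin g) → ℚ) :
    ι ℚ x * ι ℚ y = -(ι ℚ y * ι ℚ x) :=
  eq_neg_of_add_eq_zero_left (ExteriorAlgebra.ι_add_mul_swap x y)

private lemma swap3Aux (x y z : (Fin 4 × Fin g) → ℚ) :
    ι ℚ x * ι ℚ y * ι ℚ z = ι ℚ z * ι ℚ x * ι ℚ y := by
  rw [mul_assoc, iaAux y z, mul_neg, ← mul_assoc, iaAux x z, neg_mul, neg_neg]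

private lemma pairCommAux (x y z w : (Fin 4 × Fin g) → ℚ) :
    (ι ℚ x * ι ℚ y) * (ι ℚ z * ι ℚ w) = (ι ℚ z * ι ℚ w) * (ι ℚ x * ι ℚ y) := by
  calc (ι ℚ x * ι ℚ y) * (ι ℚ z * ι ℚ w)
      = (ι ℚ x * ι ℚ y * ι ℚ z) * ι ℚ w := by noncomm_ring
    _ = (ι ℚ z * ι ℚ x * ι ℚ y) * ι ℚ w := by rw [swap3Aux]
    _ = ι ℚ z * (ι ℚ x * ι ℚ y * ι ℚ w) := by noncomm_ring
    _ = ι ℚ z * (ι ℚ w * ι ℚ x * ι ℚ y) := by rw [swap3Aux]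
    _ = (ι ℚ z * ι ℚ w) * (ι ℚ x * ι ℚ y) := by noncomm_ring

private lemma xyxAux (x y : (Fin 4 × Fin g) → ℚ) : ι ℚ x * ι ℚ y * ι ℚ x = 0 := by
  rw [swap3Aux x y x, ExteriorAlgebra.ι_sq_zero, zero_mul]

private lemma sq2Aux (x y : (Fin 4 × Fin g) → ℚ) :
    (ι ℚ x * ι ℚ y) * (ι ℚ x * ι ℚ y) = 0 := by
  calc (ι ℚ x * ι ℚ y) * (ι ℚ x * ι ℚ y) = (ι ℚ x * ι ℚ y * ι ℚ x) * ι ℚ y := by noncomm_ring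
    _ = 0 := by rw [xyxAux, zero_mul]

private lemma z1Aux (x y w : (Fin 4 × Fin g) → ℚ) :
    (ι ℚ x * ι ℚ y) * (ι ℚ x * ι ℚ w) = 0 := by
  calc (ι ℚ x * ι ℚ y) * (ι ℚ x * ι ℚ w) = (ι ℚ x * ι ℚ y * ι ℚ x) * ι ℚ w := by noncomm_ring
    _ = 0 := by rw [xyxAux, zero_mul]

private lemma z2Aux (x y z : (Fin 4 × Fin g) → ℚ) :
    (ι ℚ x * ι ℚ y) * (ι ℚ z * ι ℚ y) = 0 := by
  calc (ι ℚ x * ι ℚ y) * (ι ℚ z * ι ℚ y) = ι ℚ x * (ι ℚ y * ι ℚ z * ι ℚ y) := by noncomm_ring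
    _ = 0 := by rw [xyxAux, mul_zero]

private lemma pqAux (x y z w : (Fin 4 × Fin g) → ℚ) :
    (ι ℚ x * ι ℚ w) * (ι ℚ z * ι ℚ y) = -((ι ℚ x * ι ℚ y) * (ι ℚ z * ι ℚ w)) := by
  calc (ι ℚ x * ι ℚ w) * (ι ℚ z * ι ℚ y)
      = ι ℚ x * (ι ℚ w * ι ℚ z) * ι ℚ y := by noncomm_ring
    _ = ι ℚ x * (-(ι ℚ z * ι ℚ w)) * ι ℚ y := by rw [iaAux w z]
    _ = -(ι ℚ x * (ι ℚ z * (ι ℚ w * ι ℚ y))) := by noncomm_ring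
    _ = -(ι ℚ x * (ι ℚ z * (-(ι ℚ y * ι ℚ w)))) := by rw [iaAux w y]
    _ = ι ℚ x * (ι ℚ z * ι ℚ y) * ι ℚ w := by noncomm_ring
    _ = ι ℚ x * (-(ι ℚ y * ι ℚ z)) * ι ℚ w := by rw [iaAux z y]
    _ = -((ι ℚ x * ι ℚ y) * (ι ℚ z * ι ℚ w)) := by noncomm_ring

end Ext

set_option synthInstance.maxHeartbeats 1000000 in
set_option maxHeartbeats 4000000 in
/-- For `ℓ + m = g`, one has
`θ^ℓ ∧ η^(2m) ∧ θ′^(g-m) = (-1)^m · (ℓ!·(2m)!·g!/m!) · Ω ∧ Ω′`. -/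
theorem theta_pow_mul_eta_pow_mul_theta'_pow (g ℓ m : ℕ) (hg : 1 ≤ g) (h : ℓ + m = g) :
    theta g ^ ℓ * eta g ^ (2 * m) * theta' g ^ (g - m) =
      ((-1 : ℚ) ^ m *
          ((ℓ.factorial * (2 * m).factorial * g.factorial : ℚ) / m.factorial)) •
        (Omega g * Omega' g) := by
  classical
  have hgm : g - m = ℓ := by omega
  rw [hgm]
  set EA := ExteriorAlgebra ℚ ((Fin 4 × Fin g) → ℚ) with hEA
  set sC : Set EA :=
    {x | ∃ u v : (Fin 4 × Fin g) → ℚ, x = ExteriorAlgebra.ι ℚ u * ExteriorAlgebra.ι ℚ v}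
    with hsC
  have hcomm : ∀ a ∈ sC, ∀ b ∈ sC, a * b = b * a := by
    rintro a ⟨u, v, rfl⟩ b ⟨u', v', rfl⟩
    exact pairCommAux u v u' v'
  letI : CommRing (Algebra.adjoin ℚ sC) := Algebra.adjoinCommRingOfComm ℚ hcomm
  have memgen : ∀ (j j' : Fin 4) (i i' : Fin g),
      gen g j i * gen g j' i' ∈ Algebra.adjoin ℚ sC :=
    fun j j' i i' => Algebra.subset_adjoin ⟨_, _, rfl⟩
  set T : Fin g → Algebra.adjoin ℚ sC :=
    fun i => ⟨gen g 0 i * gen g 1 i, memgen 0 1 i i⟩ with hT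
  set T' : Fin g → Algebra.adjoin ℚ sC :=
    fun i => ⟨gen g 2 i * gen g 3 i, memgen 2 3 i i⟩ with hT'
  set P : Fin g → Algebra.adjoin ℚ sC :=
    fun i => ⟨gen g 0 i * gen g 3 i, memgen 0 3 i i⟩ with hP
  set Q : Fin g → Algebra.adjoin ℚ sC :=
    fun i => ⟨gen g 2 i * gen g 1 i, memgen 2 1 i i⟩ with hQ
  have main := genericMainAux37 (Rc := Algebra.adjoin ℚ sC) h T T' P Q
    (fun i => Subtype.ext (sq2Aux _ _))
    (fun i => Subtype.ext (sq2Aux _ _))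
    (fun i => Subtype.ext (sq2Aux _ _))
    (fun i => Subtype.ext (sq2Aux _ _))
    (fun i => Subtype.ext (z1Aux _ _ _))
    (fun i => Subtype.ext (z2Aux _ _ _))
    (fun i => Subtype.ext (z2Aux _ _ _))
    (fun i => Subtype.ext (z1Aux _ _ _))
    (fun i => Subtype.ext (pqAux _ _ _ _))
  -- coercion lemmas
  have coe_mul : ∀ x y : Algebra.adjoin ℚ sC, ((x * y : _) : EA) = (x : EA) * (y : EA) :=
    fun _ _ => rfl
  have coe_add : ∀ x y : Algebra.adjoin ℚ sC, ((x + y : _) : EA) = (x : EA) + (y : EA) :=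
    fun _ _ => rfl
  have coe_pow : ∀ (x : Algebra.adjoin ℚ sC) (n : ℕ), ((x ^ n : _) : EA) = (x : EA) ^ n := by
    intro x n
    induction n with
    | zero => rw [pow_zero, pow_zero]; rfl
    | succ n ih => rw [pow_succ, pow_succ, coe_mul, ih]
  have coe_sum : ∀ (s : Finset (Fin g)) (f : Fin g → Algebra.adjoin ℚ sC),
      ((∑ i ∈ s, f i : _) : EA) = ∑ i ∈ s, (f i : EA) := by
    intro s f
    induction s using Finset.cons_induction with
    | empty => rfl
    | cons a s ha ih => rw [Finset.sum_cons, Finset.sum_cons, coe_add, ih]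
  have coe_list : ∀ l : List (Algebra.adjoin ℚ sC),
      (l.prod : EA) = (l.map Subtype.val).prod := by
    intro l
    induction l with
    | nil => rfl
    | cons a l ih => rw [List.prod_cons, List.map_cons, List.prod_cons, coe_mul, ih]
  have coe_nat : ∀ n : ℕ, ((n : Algebra.adjoin ℚ sC) : EA) = (n : EA) := by
    intro n
    induction n with
    | zero => rw [Nat.cast_zero, Nat.cast_zero]; rfl
    | succ n ih => rw [Nat.cast_succ, Nat.cast_succ, coe_add, ih]; rfl
  have coe_neg : ∀ x : Algebra.adjoin ℚ sC, ((-x : _) : EA) = -(x : EA) := fun _ => rfl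
  have coe_one : ((1 : Algebra.adjoin ℚ sC) : EA) = 1 := rfl
  have main' := congrArg Subtype.val main
  simp only [coe_mul, coe_add, coe_pow, coe_sum, coe_nat, coe_neg, coe_one] at main'
  -- identify pieces
  have hth : ∑ i ∈ Finset.univ, ((T i : EA)) = theta g := rfl
  have hth' : ∑ i ∈ Finset.univ, ((T' i : EA)) = theta' g := rfl
  have heta : (∑ i ∈ Finset.univ, ((P i : EA))) + ∑ i ∈ Finset.univ, ((Q i : EA))
      = eta g := by
    rw [← Finset.sum_add_distrib]; rfl
  have hprod : ((∏ i, (T i * T' i) : Algebra.adjoin ℚ sC) : EA) = Omega g * Omega' g := by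
    rw [Finset.prod_mul_distrib, coe_mul, Fin.prod_univ_def, Fin.prod_univ_def,
      coe_list, coe_list, List.map_map, List.map_map]
    rfl
  rw [hth, hth', heta, hprod] at main'
  rw [main']
  -- scalar arithmetic
  have hc : (g.choose ℓ) * ℓ.factorial * m.factorial = g.factorial := by
    have h2 := Nat.choose_mul_factorial_mul_factorial (show ℓ ≤ g by omega)
    rw [show g - ℓ = m by omega] at h2
    exact h2
  have hm0 : (m.factorial : ℚ) ≠ 0 := Nat.cast_ne_zero.2 m.factorial_ne_zero
  have hq : ((-1 : ℚ) ^ m *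
        ((ℓ.factorial * (2 * m).factorial * g.factorial : ℚ) / m.factorial))
      = ((ℓ.factorial * ℓ.factorial * (2 * m).factorial * g.choose ℓ : ℕ) : ℚ)
          * (-1 : ℚ) ^ m := by
    field_simp
    rw [← hc]
    push_cast
    ring
  rw [Algebra.smul_def, hq, map_mul, map_pow, map_neg, map_one, map_natCast]
  exact (mul_assoc _ _ _).symm
end

section
/- Let ℓ, m, k ≥ 0 be integers with ℓ + (2m+1) + k = 2g. Then in the exterior algebra Λ(V) one has θ^ℓ ∧ η^{2m+1} ∧ (θ′)^{k} = 0; in other words, any top-degree wedge product involving an odd power of the mixed class η vanishes. -/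
/-- Sign: `+1` on the unprimed generators `a, b`, `-1` on the primed ones `a′, b′`. -/
def sgn4 (j : Fin 4) : ℚ := if (j : ℕ) < 2 then 1 else -1

@[simp] lemma sgn4_0 : sgn4 0 = 1 := rfl
@[simp] lemma sgn4_1 : sgn4 1 = 1 := rfl
@[simp] lemma sgn4_2 : sgn4 2 = -1 := rfl
@[simp] lemma sgn4_3 : sgn4 3 = -1 := rfl

/-- The linear involution of `V` negating the primed generators. -/
noncomputable def Lmap (g : ℕ) : ((Fin 4 × Fin g) → ℚ) →ₗ[ℚ] ((Fin 4 × Fin g) → ℚ) where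
  toFun v := fun p => sgn4 p.1 * v p
  map_add' u v := by funext p; simp [mul_add]
  map_smul' c v := by funext p; simp [smul_eq_mul]; ring

lemma Lmap_single (g : ℕ) (p : Fin 4 × Fin g) :
    Lmap g (Pi.single p 1) = sgn4 p.1 • (Pi.single p 1 : (Fin 4 × Fin g) → ℚ) := by
  funext q
  simp only [Lmap, LinearMap.coe_mk, AddHom.coe_mk, Pi.smul_apply, smul_eq_mul,
    Pi.single_apply]
  by_cases hq : q = p
  · subst hq; simp
  · simp [hq]

/-- The algebra involution of `Λ(V)` negating the primed generators. -/
noncomputable def Phi (g : ℕ) :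
    ExteriorAlgebra ℚ ((Fin 4 × Fin g) → ℚ) →ₐ[ℚ] ExteriorAlgebra ℚ ((Fin 4 × Fin g) → ℚ) :=
  ExteriorAlgebra.lift ℚ ⟨(ExteriorAlgebra.ι ℚ).comp (Lmap g), fun m => by
    simpa using ExteriorAlgebra.ι_sq_zero (R := ℚ) (Lmap g m)⟩

lemma Phi_ι (g : ℕ) (v : (Fin 4 × Fin g) → ℚ) :
    Phi g (ExteriorAlgebra.ι ℚ v) = ExteriorAlgebra.ι ℚ (Lmap g v) := by
  simp only [Phi, ExteriorAlgebra.lift_ι_apply, LinearMap.coe_comp, Function.comp_apply]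

lemma Phi_gen (g : ℕ) (j : Fin 4) (i : Fin g) :
    Phi g (gen g j i) = sgn4 j • gen g j i := by
  rw [gen, Phi_ι, Lmap_single, map_smul]

lemma Phi_theta (g : ℕ) : Phi g (theta g) = theta g := by
  rw [theta, map_sum]
  refine Finset.sum_congr rfl fun i _ => ?_
  rw [map_mul, Phi_gen, Phi_gen]
  simp

lemma Phi_theta' (g : ℕ) : Phi g (theta' g) = theta' g := by
  rw [theta', map_sum]
  refine Finset.sum_congr rfl fun i _ => ?_
  rw [map_mul, Phi_gen, Phi_gen]
  simp [smul_mul_assoc, mul_smul_comm]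

lemma Phi_eta (g : ℕ) : Phi g (eta g) = - eta g := by
  rw [eta, map_sum, ← Finset.sum_neg_distrib]
  refine Finset.sum_congr rfl fun i _ => ?_
  rw [map_add, map_mul, map_mul, Phi_gen, Phi_gen, Phi_gen, Phi_gen]
  simp [smul_mul_assoc, mul_smul_comm]
  abel

/-- An identification `Fin (4*g) ≃ Fin 4 × Fin g`. -/
def volIdx (g : ℕ) : Fin (4 * g) ≃ Fin 4 × Fin g := finProdFinEquiv.symm

/-- The volume element `a₁ ∧ b₁ ∧ ⋯`. -/
noncomputable def vol (g : ℕ) : ExteriorAlgebra ℚ ((Fin 4 × Fin g) → ℚ) :=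
  ExteriorAlgebra.ιMulti ℚ (4 * g) fun t => Pi.single (volIdx g t) 1

lemma ιMulti_single_mem (g : ℕ) (f : Fin (4 * g) → Fin 4 × Fin g) :
    ExteriorAlgebra.ιMulti ℚ (4 * g)
      (fun t => (Pi.single (f t) 1 : (Fin 4 × Fin g) → ℚ))
      ∈ Submodule.span ℚ {vol g} := by
  by_cases hf : Function.Injective f
  · have hbij : Function.Bijective f :=
      (Fintype.bijective_iff_injective_and_card f).2 ⟨hf, by simp⟩
    set e := Equiv.ofBijective f hbij with he
    set σ : Equiv.Perm (Fin (4 * g)) := e.trans (volIdx g).symm with hσ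
    have hfn : (fun t => (Pi.single (f t) 1 : (Fin 4 × Fin g) → ℚ))
        = (fun t => (Pi.single (volIdx g t) 1 : (Fin 4 × Fin g) → ℚ)) ∘ σ := by
      funext t
      simp [hσ, he, Equiv.ofBijective_apply]
    rw [hfn, AlternatingMap.map_perm]
    rcases Int.units_eq_one_or (Equiv.Perm.sign σ) with hs | hs <;> rw [hs]
    · simpa [vol] using Submodule.mem_span_singleton_self (vol g)
    · have : ((-1 : ℤˣ) • (ExteriorAlgebra.ιMulti ℚ (4 * g)
          fun t => (Pi.single (volIdx g t) 1 : (Fin 4 × Fin g) → ℚ))) = - vol g := by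
        simp [vol]
      rw [this]
      exact Submodule.neg_mem _ (Submodule.mem_span_singleton_self (vol g))
  · obtain ⟨x, y, hxy, hne⟩ := Function.not_injective_iff.1 hf
    have h0 : ExteriorAlgebra.ιMulti ℚ (4 * g)
        (fun t => (Pi.single (f t) 1 : (Fin 4 × Fin g) → ℚ)) = 0 :=
      AlternatingMap.map_eq_zero_of_eq _ _ (by rw [hxy]) hne
    rw [h0]
    exact Submodule.zero_mem _

lemma top_le_span (g : ℕ) :
    (⋀[ℚ]^(4 * g) ((Fin 4 × Fin g) → ℚ) : Submodule ℚ _) ≤ Submodule.span ℚ {vol g} := by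
  rw [← ExteriorAlgebra.ιMulti_span_fixedDegree, Submodule.span_le]
  rintro x ⟨v, rfl⟩
  have hv : v = fun t => ∑ p : Fin 4 × Fin g, v t p • (Pi.single p 1 : (Fin 4 × Fin g) → ℚ) := by
    funext t q
    simp [Pi.single_apply, Finset.sum_ite_eq']
  rw [hv]
  have hexp : ExteriorAlgebra.ιMulti ℚ (4 * g)
        (fun t => ∑ p : Fin 4 × Fin g, v t p • (Pi.single p 1 : (Fin 4 × Fin g) → ℚ))
      = ∑ r : Fin (4 * g) → Fin 4 × Fin g, (∏ t, v t (r t)) •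
          ExteriorAlgebra.ιMulti ℚ (4 * g)
            (fun t => (Pi.single (r t) 1 : (Fin 4 × Fin g) → ℚ)) := by
    have h1 := MultilinearMap.map_sum (ExteriorAlgebra.ιMulti ℚ (4 * g)
        (M := (Fin 4 × Fin g) → ℚ)).toMultilinearMap
      (g := fun t p => v t p • (Pi.single p 1 : (Fin 4 × Fin g) → ℚ))
    simp only [AlternatingMap.coe_multilinearMap] at h1
    rw [h1]
    refine Finset.sum_congr rfl fun r _ => ?_
    have h2 := MultilinearMap.map_smul_univ (ExteriorAlgebra.ιMulti ℚ (4 * g)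
        (M := (Fin 4 × Fin g) → ℚ)).toMultilinearMap
      (fun t => v t (r t)) (fun t => (Pi.single (r t) 1 : (Fin 4 × Fin g) → ℚ))
    simpa using h2
  rw [hexp]
  exact Submodule.sum_mem _ fun r _ => Submodule.smul_mem _ _ (ιMulti_single_mem g r)

lemma Phi_vol (g : ℕ) : Phi g (vol g) = vol g := by
  rw [vol, ExteriorAlgebra.ιMulti_apply, map_list_prod, List.map_ofFn]
  have h1 : (Phi g) ∘ (fun i => ExteriorAlgebra.ι ℚ (Pi.single (volIdx g i) (1:ℚ)))
      = fun i => ExteriorAlgebra.ι ℚ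
          (sgn4 (volIdx g i).1 • (Pi.single (volIdx g i) 1 : (Fin 4 × Fin g) → ℚ)) := by
    funext i
    rw [Function.comp_apply, Phi_ι, Lmap_single]
  rw [h1]
  have h2 : (List.ofFn fun i => ExteriorAlgebra.ι ℚ
        (sgn4 (volIdx g i).1 • (Pi.single (volIdx g i) 1 : (Fin 4 × Fin g) → ℚ))).prod
      = ExteriorAlgebra.ιMulti ℚ (4 * g)
          (fun i => sgn4 (volIdx g i).1 • (Pi.single (volIdx g i) 1 : (Fin 4 × Fin g) → ℚ)) :=
    (ExteriorAlgebra.ιMulti_apply _).symm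
  rw [h2]
  have h3 := MultilinearMap.map_smul_univ (ExteriorAlgebra.ιMulti ℚ (4 * g)
      (M := (Fin 4 × Fin g) → ℚ)).toMultilinearMap
    (fun i => sgn4 (volIdx g i).1) (fun i => (Pi.single (volIdx g i) 1 : (Fin 4 × Fin g) → ℚ))
  simp only [AlternatingMap.coe_multilinearMap] at h3
  rw [h3]
  have h4 : ∏ i : Fin (4 * g), sgn4 (volIdx g i).1 = 1 := by
    rw [Equiv.prod_comp (volIdx g) (fun p : Fin 4 × Fin g => sgn4 p.1)]
    rw [Fintype.prod_prod_type]
    simp only [Finset.prod_const, Finset.card_univ, Fintype.card_fin]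
    rw [Finset.prod_pow, Fin.prod_univ_four]
    norm_num
  rw [h4, one_smul]
  rfl

/-- Any top-degree wedge product involving an odd power of the mixed class `η`
vanishes: if `ℓ + (2m+1) + k = 2g` then `θ^ℓ ∧ η^(2m+1) ∧ θ′^k = 0`. -/
theorem theta_pow_mul_eta_odd_pow_mul_theta'_pow_eq_zero (g ℓ m k : ℕ) (hg : 1 ≤ g)
    (h : ℓ + (2 * m + 1) + k = 2 * g) :
    theta g ^ ℓ * eta g ^ (2 * m + 1) * theta' g ^ k = 0 := by
  set P : Submodule ℚ (ExteriorAlgebra ℚ ((Fin 4 × Fin g) → ℚ)) :=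
    LinearMap.range (ExteriorAlgebra.ι ℚ) with hP
  set x := theta g ^ ℓ * eta g ^ (2 * m + 1) * theta' g ^ k with hx
  have htheta : theta g ∈ P ^ 2 := by
    refine Submodule.sum_mem _ fun i _ => ?_
    rw [pow_two]
    exact Submodule.mul_mem_mul ⟨_, rfl⟩ ⟨_, rfl⟩
  have htheta' : theta' g ∈ P ^ 2 := by
    refine Submodule.sum_mem _ fun i _ => ?_
    rw [pow_two]
    exact Submodule.mul_mem_mul ⟨_, rfl⟩ ⟨_, rfl⟩
  have heta : eta g ∈ P ^ 2 := by
    refine Submodule.sum_mem _ fun i _ => ?_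
    rw [pow_two]
    exact Submodule.add_mem _ (Submodule.mul_mem_mul ⟨_, rfl⟩ ⟨_, rfl⟩)
      (Submodule.mul_mem_mul ⟨_, rfl⟩ ⟨_, rfl⟩)
  have hmem : x ∈ P ^ (4 * g) := by
    have hpow : P ^ (4 * g) = (P ^ 2) ^ ℓ * (P ^ 2) ^ (2 * m + 1) * (P ^ 2) ^ k := by
      rw [← pow_mul, ← pow_mul, ← pow_mul, ← pow_add, ← pow_add]
      congr 1
      omega
    rw [hx, hpow]
    exact Submodule.mul_mem_mul
      (Submodule.mul_mem_mul (Submodule.pow_mem_pow _ htheta ℓ)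
        (Submodule.pow_mem_pow _ heta (2 * m + 1)))
      (Submodule.pow_mem_pow _ htheta' k)
  have hspan : x ∈ Submodule.span ℚ {vol g} := top_le_span g hmem
  obtain ⟨c, hc⟩ := Submodule.mem_span_singleton.1 hspan
  have hfix : Phi g x = x := by
    rw [← hc, map_smul, Phi_vol]
  have hneg : Phi g x = -x := by
    rw [hx, map_mul, map_mul, map_pow, map_pow, map_pow, Phi_theta, Phi_eta, Phi_theta',
      Odd.neg_pow ⟨m, by ring⟩, mul_neg, neg_mul]
  have h0 : x = -x := hfix.symm.trans hneg
  have h2 : (2 : ℚ) • x = 0 := by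
    rw [two_smul]
    nth_rewrite 1 [h0]
    exact neg_add_cancel x
  calc x = (2⁻¹ : ℚ) • ((2 : ℚ) • x) := by rw [smul_smul]; norm_num
    _ = 0 := by rw [h2, smul_zero]
end

section
/- Let N ≥ 1, b ≥ 1, d ≥ 0 be integers and set p = d − b(N−1). Consider the ℂ-vector space of polynomials f ∈ ℂ[X₁,…,X_N] of the form f = (∏_{1≤i<j≤N}(Xᵢ − Xⱼ))^b · P with P a symmetric polynomial, subject to the condition that the degree of f in each variable Xᵢ is at most d. If p ≥ 0 this space has dimension C(N+p, p); if p < 0 this space is the zero space. (This is the genus-0 case of the rank formula for the Laughlin vector bundle, together with the genus-0 Wen–Zee vanishing.) -/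
/-- The Vandermonde product `∏_{1 ≤ i < j ≤ N} (Xᵢ - Xⱼ)` in `ℂ[X₁,…,X_N]`. -/
noncomputable def vandermondeProd (N : ℕ) : MvPolynomial (Fin N) ℂ :=
  ∏ i : Fin N, ∏ j ∈ Finset.Ioi i, (MvPolynomial.X i - MvPolynomial.X j)

open MvPolynomial Finset

namespace LaughlinAux

variable {n N q : ℕ}

lemma degreeOf_mul_eq' (i : Fin (n+1)) (f g : MvPolynomial (Fin (n+1)) ℂ)
    (hf : f ≠ 0) (hg : g ≠ 0) :
    degreeOf i (f * g) = degreeOf i f + degreeOf i g := by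
  have key : ∀ h : MvPolynomial (Fin (n+1)) ℂ,
      degreeOf i h = (finSuccEquiv ℂ n (rename (Equiv.swap i 0) h)).natDegree := by
    intro h
    rw [natDegree_finSuccEquiv]
    have := degreeOf_rename_of_injective (p := h) (Equiv.injective (Equiv.swap i 0)) i
    simpa using this.symm
  have hren : ∀ h : MvPolynomial (Fin (n+1)) ℂ, h ≠ 0 → rename (Equiv.swap i 0) h ≠ 0 := by
    intro h hh
    exact fun hc => hh ((map_eq_zero_iff _ (rename_injective _ (Equiv.injective _))).mp hc)
  rw [key, key, key, map_mul, map_mul, Polynomial.natDegree_mul]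
  · exact fun hc => hren f hf ((map_eq_zero_iff _ (AlgEquiv.injective _)).mp hc)
  · exact fun hc => hren g hg ((map_eq_zero_iff _ (AlgEquiv.injective _)).mp hc)

lemma degreeOf_prod_eq {ι : Type*} (i : Fin (n+1)) (s : Finset ι)
    (f : ι → MvPolynomial (Fin (n+1)) ℂ) (hf : ∀ j ∈ s, f j ≠ 0) :
    degreeOf i (∏ j ∈ s, f j) = ∑ j ∈ s, degreeOf i (f j) := by
  classical
  induction s using Finset.induction_on with
  | empty => simp [degreeOf, degrees_one]
  | @insert a s' hj ih =>
    rw [Finset.prod_insert hj, Finset.sum_insert hj,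
      degreeOf_mul_eq' i _ _ (hf a (Finset.mem_insert_self a s'))
        (Finset.prod_ne_zero_iff.mpr fun j hjs => hf j (Finset.mem_insert_of_mem hjs)),
      ih (fun j hjs => hf j (Finset.mem_insert_of_mem hjs))]

lemma degreeOf_pow_eq (i : Fin (n+1)) (f : MvPolynomial (Fin (n+1)) ℂ) (hf : f ≠ 0) (b : ℕ) :
    degreeOf i (f ^ b) = b * degreeOf i f := by
  induction b with
  | zero => simp [degreeOf, degrees_one]
  | succ b ih =>
    rw [pow_succ, degreeOf_mul_eq' i _ _ (pow_ne_zero _ hf) hf, ih]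
    ring

lemma X_sub_X_ne_zero {i j : Fin (n+1)} (h : i ≠ j) :
    (X i - X j : MvPolynomial (Fin (n+1)) ℂ) ≠ 0 := by
  intro hc
  have := sub_eq_zero.mp hc
  exact h (by simpa using (X_injective.eq_iff.mp this))

lemma degreeOf_X_sub_X (k i j : Fin (n+1)) (h : i ≠ j) :
    degreeOf k (X i - X j : MvPolynomial (Fin (n+1)) ℂ) = if k = i ∨ k = j then 1 else 0 := by
  classical
  have hle : degreeOf k (X i - X j : MvPolynomial (Fin (n+1)) ℂ)
      ≤ max (degreeOf k (X i : MvPolynomial (Fin (n+1)) ℂ))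
          (degreeOf k (X j : MvPolynomial (Fin (n+1)) ℂ)) := by
    rw [sub_eq_add_neg]
    refine le_trans (degreeOf_add_le _ _ _) ?_
    have h2 : degreeOf k (-(X j) : MvPolynomial (Fin (n+1)) ℂ) = degreeOf k (X j : MvPolynomial (Fin (n+1)) ℂ) := by
      unfold degreeOf
      rw [degrees_neg]
    rw [h2]
  split_ifs with hk
  · refine le_antisymm ?_ ?_
    · refine le_trans hle ?_
      rw [degreeOf_X, degreeOf_X]
      rcases hk with rfl | rfl <;> simp <;> split_ifs <;> norm_num
    · -- coeff at single k 1 is nonzero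
      rcases hk with rfl | rfl
      · have hne : (Finsupp.single j 1 : Fin (n+1) →₀ ℕ) ≠ Finsupp.single k 1 := by
          rw [Ne, Finsupp.single_left_inj (one_ne_zero)]
          exact Ne.symm h
        have hsupp : (Finsupp.single k 1 : Fin (n+1) →₀ ℕ) ∈ (X k - X j : MvPolynomial (Fin (n+1)) ℂ).support := by
          rw [mem_support_iff, coeff_sub, coeff_X, coeff_X', if_neg hne]
          norm_num
        have := monomial_le_degreeOf k hsupp
        simpa using this
      · have hne : (Finsupp.single i 1 : Fin (n+1) →₀ ℕ) ≠ Finsupp.single k 1 := by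
          rw [Ne, Finsupp.single_left_inj (one_ne_zero)]
          exact h
        have hsupp : (Finsupp.single k 1 : Fin (n+1) →₀ ℕ) ∈ (X i - X k : MvPolynomial (Fin (n+1)) ℂ).support := by
          rw [mem_support_iff, coeff_sub, coeff_X, coeff_X', if_neg hne]
          norm_num
        have := monomial_le_degreeOf k hsupp
        simpa using this
  · push_neg at hk
    refine Nat.le_zero.mp (le_trans hle ?_)
    rw [degreeOf_X, degreeOf_X, if_neg hk.1, if_neg hk.2]
    simp


lemma vandermondeProd_ne_zero : vandermondeProd (n+1) ≠ 0 := by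
  rw [vandermondeProd]
  rw [Finset.prod_ne_zero_iff]
  intro i _
  rw [Finset.prod_ne_zero_iff]
  intro j hj
  exact X_sub_X_ne_zero (Finset.mem_Ioi.mp hj).ne'.symm

lemma degreeOf_vandermondeProd (k : Fin (n+1)) :
    degreeOf k (vandermondeProd (n+1)) = n := by
  classical
  rw [vandermondeProd, degreeOf_prod_eq k _ _
    (fun i _ => Finset.prod_ne_zero_iff.mpr fun j hj =>
      X_sub_X_ne_zero (Finset.mem_Ioi.mp hj).ne'.symm)]
  have step : ∀ i : Fin (n+1),
      degreeOf k (∏ j ∈ Finset.Ioi i, (X i - X j : MvPolynomial (Fin (n+1)) ℂ))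
        = ∑ j ∈ Finset.Ioi i, if k = i ∨ k = j then 1 else 0 := by
    intro i
    rw [degreeOf_prod_eq k _ _
      (fun j hj => X_sub_X_ne_zero (Finset.mem_Ioi.mp hj).ne'.symm)]
    exact Finset.sum_congr rfl fun j hj =>
      degreeOf_X_sub_X k i j (Finset.mem_Ioi.mp hj).ne'.symm
  simp_rw [step]
  have split : ∀ i : Fin (n+1), ∀ j ∈ Finset.Ioi i,
      (if k = i ∨ k = j then (1:ℕ) else 0)
        = (if k = i then 1 else 0) + (if k = j then 1 else 0) := by
    intro i j hj
    have hij : i ≠ j := (Finset.mem_Ioi.mp hj).ne'.symm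
    by_cases h1 : k = i <;> by_cases h2 : k = j <;> simp_all
  calc (∑ i : Fin (n+1), ∑ j ∈ Finset.Ioi i, if k = i ∨ k = j then (1:ℕ) else 0)
      = ∑ i : Fin (n+1), (∑ j ∈ Finset.Ioi i, ((if k = i then (1:ℕ) else 0)
          + (if k = j then 1 else 0))) := by
        exact Finset.sum_congr rfl fun i _ => Finset.sum_congr rfl (split i)
    _ = (∑ i : Fin (n+1), ∑ j ∈ Finset.Ioi i, (if k = i then (1:ℕ) else 0))
        + ∑ i : Fin (n+1), ∑ j ∈ Finset.Ioi i, (if k = j then (1:ℕ) else 0) := by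
        rw [← Finset.sum_add_distrib]
        exact Finset.sum_congr rfl fun i _ => Finset.sum_add_distrib
    _ = (Finset.Ioi k).card + (Finset.Iio k).card := by
        congr 1
        · rw [Finset.sum_eq_single k]
          · simp
          · intro i _ hik
            simp [Ne.symm hik]
          · simp
        · have : ∀ i : Fin (n+1), (∑ j ∈ Finset.Ioi i, if k = j then (1:ℕ) else 0)
              = if i < k then 1 else 0 := by
            intro i
            rw [Finset.sum_ite_eq (Finset.Ioi i) k (fun _ => (1:ℕ))]
            simp [Finset.mem_Ioi]
          simp_rw [this]
          rw [Finset.sum_boole]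
          norm_cast
          congr 1
          ext x
          simp [Finset.mem_Iio]
    _ = n := by
        rw [Fin.card_Ioi, Fin.card_Iio]
        omega
/-- Monotone tuples index set. -/
abbrev MonoT (N q : ℕ) := {f : Fin N → Fin (q+1) // Monotone f}

/-- The finsupp exponent vector of a monotone tuple. -/
noncomputable def monoExp (g : MonoT N q) : Fin N →₀ ℕ :=
  Finsupp.equivFunOnFinite.symm fun i => (g.1 i : ℕ)

@[simp] lemma monoExp_apply (g : MonoT N q) (i : Fin N) : monoExp g i = (g.1 i : ℕ) := rfl

/-- The orbit of an exponent vector under permutations of the variables. -/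
noncomputable def orbitSet (m : Fin N →₀ ℕ) : Finset (Fin N →₀ ℕ) :=
  Finset.image (fun σ : Equiv.Perm (Fin N) => Finsupp.mapDomain σ m) Finset.univ

lemma mem_orbitSet {m μ : Fin N →₀ ℕ} :
    μ ∈ orbitSet m ↔ ∃ σ : Equiv.Perm (Fin N), Finsupp.mapDomain σ m = μ := by
  simp [orbitSet]

lemma mapDomain_perm_apply (σ : Equiv.Perm (Fin N)) (m : Fin N →₀ ℕ) (i : Fin N) :
    Finsupp.mapDomain σ m i = m (σ.symm i) :=
  Finsupp.mapDomain_equiv_apply m i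

lemma self_mem_orbitSet (m : Fin N →₀ ℕ) : m ∈ orbitSet m :=
  mem_orbitSet.mpr ⟨1, by simp [Finsupp.mapDomain_id]⟩

lemma orbitSet_bound {m μ : Fin N →₀ ℕ} (hm : ∀ i, m i ≤ q) (hμ : μ ∈ orbitSet m) :
    ∀ i, μ i ≤ q := by
  obtain ⟨σ, rfl⟩ := mem_orbitSet.mp hμ
  intro i
  rw [mapDomain_perm_apply]
  exact hm _

/-- The monomial symmetric polynomial attached to an exponent vector. -/
noncomputable def msym (m : Fin N →₀ ℕ) : MvPolynomial (Fin N) ℂ :=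
  ∑ μ ∈ orbitSet m, MvPolynomial.monomial μ 1

lemma coeff_msym (m μ : Fin N →₀ ℕ) :
    coeff μ (msym m) = if μ ∈ orbitSet m then 1 else 0 := by
  rw [msym, coeff_sum]
  simp_rw [coeff_monomial]
  rw [Finset.sum_ite_eq' (orbitSet m) μ (fun _ => (1:ℂ))]

lemma image_mapDomain_orbitSet (τ : Equiv.Perm (Fin N)) (m : Fin N →₀ ℕ) :
    Finset.image (fun μ => Finsupp.mapDomain τ μ) (orbitSet m) = orbitSet m := by
  ext ν
  simp only [Finset.mem_image, mem_orbitSet]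
  constructor
  · rintro ⟨μ, ⟨σ, rfl⟩, rfl⟩
    refine ⟨τ * σ, ?_⟩
    rw [← Finsupp.mapDomain_comp]
    rfl
  · rintro ⟨σ, rfl⟩
    refine ⟨Finsupp.mapDomain (τ⁻¹ * σ) m, ⟨τ⁻¹ * σ, rfl⟩, ?_⟩
    rw [← Finsupp.mapDomain_comp]
    have : (τ : Fin N → Fin N) ∘ (τ⁻¹ * σ : Equiv.Perm (Fin N)) = σ := by
      ext i; simp [Equiv.Perm.mul_apply]
    rw [this]

lemma msym_isSymmetric (m : Fin N →₀ ℕ) : (msym m).IsSymmetric := by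
  intro τ
  rw [msym, map_sum]
  simp_rw [rename_monomial]
  have himg := Finset.sum_image (s := orbitSet m)
    (f := fun μ => (MvPolynomial.monomial μ (1:ℂ)))
    (g := fun μ : Fin N →₀ ℕ => Finsupp.mapDomain (⇑τ) μ)
    (fun x _ y _ h => Finsupp.mapDomain_injective τ.injective h)
  rw [← himg, image_mapDomain_orbitSet]

/-- Sorting an exponent vector with values at most `q` into a monotone tuple. -/
noncomputable def sortExp (m : Fin N →₀ ℕ) (hm : ∀ i, m i ≤ q) : MonoT N q :=
  letI f : Fin N → Fin (q+1) := fun i => ⟨m i, Nat.lt_succ_of_le (hm i)⟩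
  ⟨f ∘ Tuple.sort f, Tuple.monotone_sort f⟩

lemma mem_orbit_monoExp_iff {μ : Fin N →₀ ℕ} (hμ : ∀ i, μ i ≤ q) (g : MonoT N q) :
    μ ∈ orbitSet (monoExp g) ↔ g = sortExp μ hμ := by
  classical
  set f : Fin N → Fin (q+1) := fun i => ⟨μ i, Nat.lt_succ_of_le (hμ i)⟩ with hf
  constructor
  · rintro hmem
    obtain ⟨σ, hσ⟩ := mem_orbitSet.mp hmem
    -- g.1 ∘ σ.symm = f  (as Fin-valued functions)
    have hfun : g.1 ∘ σ.symm = f := by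
      funext i
      apply Fin.val_injective
      have := congrArg (fun m : Fin N →₀ ℕ => m i) hσ
      simpa [mapDomain_perm_apply] using this
    have hcomp : f ∘ σ = g.1 := by
      funext i
      have := congrFun hfun (σ i)
      simpa using this.symm
    have hmono : Monotone (f ∘ σ) := hcomp ▸ g.2
    have := Tuple.comp_sort_eq_comp_iff_monotone.mpr hmono
    apply Subtype.ext
    rw [sortExp]
    exact (hcomp.symm.trans this)
  · rintro rfl
    apply mem_orbitSet.mpr
    refine ⟨Tuple.sort f, ?_⟩
    ext i
    rw [mapDomain_perm_apply]
    have : monoExp (sortExp μ hμ) ((Tuple.sort f).symm i)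
        = ((f ∘ Tuple.sort f) ((Tuple.sort f).symm i) : Fin (q+1)).1 := rfl
    rw [this]
    simp [hf]

lemma sortExp_monoExp (g : MonoT N q) (h : ∀ i, monoExp g i ≤ q) :
    g = sortExp (monoExp g) h :=
  (mem_orbit_monoExp_iff h g).mp (self_mem_orbitSet _)

lemma monoExp_bound (g : MonoT N q) : ∀ i, monoExp g i ≤ q := by
  intro i
  exact Nat.lt_succ_iff.mp (g.1 i).2


instance : DecidablePred (Monotone : (Fin N → Fin (q+1)) → Prop) := fun f =>
  decidable_of_iff (∀ a b, a ≤ b → f a ≤ f b)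
    ⟨fun h {a b} hab => h a b hab, fun h a b hab => h hab⟩

noncomputable instance : Fintype (MonoT N q) := Subtype.fintype _

lemma coeff_mapDomain_of_symm {P : MvPolynomial (Fin N) ℂ} (hP : P.IsSymmetric)
    (σ : Equiv.Perm (Fin N)) (m : Fin N →₀ ℕ) :
    coeff (Finsupp.mapDomain σ m) P = coeff m P := by
  conv_lhs => rw [← hP σ]
  exact coeff_rename_mapDomain σ σ.injective P m

variable (N q) in
/-- The space of symmetric polynomials of degree at most `q` in each variable. -/
noncomputable def symSpace : Submodule ℂ (MvPolynomial (Fin N) ℂ) :=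
  Subalgebra.toSubmodule (symmetricSubalgebra (Fin N) ℂ) ⊓ restrictDegree (Fin N) ℂ q

lemma support_msym_subset (m : Fin N →₀ ℕ) : (msym m).support ⊆ orbitSet m := by
  intro μ hμ
  rw [mem_support_iff, coeff_msym] at hμ
  by_contra h
  rw [if_neg h] at hμ
  exact hμ rfl

lemma msym_mem (g : MonoT N q) : msym (monoExp g) ∈ symSpace N q := by
  refine Submodule.mem_inf.mpr ⟨?_, ?_⟩
  · exact (mem_symmetricSubalgebra _).mpr (msym_isSymmetric _)
  · rw [mem_restrictDegree]
    intro s hs i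
    exact orbitSet_bound (monoExp_bound g) (support_msym_subset _ hs) i

variable (N q) in
noncomputable def basisFam (g : MonoT N q) : symSpace N q :=
  ⟨msym (monoExp g), msym_mem g⟩

lemma coeff_monoExp_msym (g g' : MonoT N q) :
    coeff (monoExp g') (msym (monoExp g)) = if g = g' then 1 else 0 := by
  rw [coeff_msym]
  by_cases h : g = g'
  · subst h
    rw [if_pos (self_mem_orbitSet _), if_pos rfl]
  · rw [if_neg, if_neg h]
    intro hmem
    have h1 := (mem_orbit_monoExp_iff (monoExp_bound g') g).mp hmem
    have h2 := sortExp_monoExp g' (monoExp_bound g')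
    exact h (h1.trans h2.symm)

lemma repr_eq (P : MvPolynomial (Fin N) ℂ) (hsym : P.IsSymmetric)
    (hdeg : ∀ s ∈ P.support, ∀ i, (s : Fin N →₀ ℕ) i ≤ q) :
    P = ∑ g : MonoT N q, coeff (monoExp g) P • msym (monoExp g) := by
  apply MvPolynomial.ext; intro μ
  rw [coeff_sum]
  simp_rw [coeff_smul, coeff_msym, smul_eq_mul, mul_ite, mul_one, mul_zero]
  by_cases hμ : ∀ i, μ i ≤ q
  · have hcond : ∀ g : MonoT N q,
        (if μ ∈ orbitSet (monoExp g) then coeff (monoExp g) P else 0)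
          = (if g = sortExp μ hμ then coeff (monoExp g) P else 0) := by
      intro g
      congr 1
      · exact propext (mem_orbit_monoExp_iff hμ g)
    rw [Finset.sum_congr rfl (fun g _ => hcond g),
      Finset.sum_ite_eq' Finset.univ (sortExp μ hμ) (fun g => coeff (monoExp g) P),
      if_pos (Finset.mem_univ _)]
    obtain ⟨σ, hσ⟩ := mem_orbitSet.mp
      ((mem_orbit_monoExp_iff hμ (sortExp μ hμ)).mpr rfl)
    conv_lhs => rw [← hσ]
    rw [coeff_mapDomain_of_symm hsym]
  · push_neg at hμ
    obtain ⟨i, hi⟩ := hμ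
    have h1 : coeff μ P = 0 := by
      by_contra h
      exact absurd (hdeg μ (mem_support_iff.mpr h) i) (Nat.not_le.mpr hi)
    rw [h1]
    symm
    apply Finset.sum_eq_zero
    intro g _
    rw [if_neg]
    intro hmem
    exact absurd (orbitSet_bound (monoExp_bound g) hmem i) (Nat.not_le.mpr hi)

lemma linearIndependent_basisFam : LinearIndependent ℂ (basisFam N q) := by
  rw [Fintype.linearIndependent_iff]
  intro c hc g₀
  have := congrArg (fun x : symSpace N q => coeff (monoExp g₀) (x : MvPolynomial (Fin N) ℂ)) hc
  simp only [basisFam] at this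
  rw [show ((∑ g, c g • (⟨msym (monoExp g), msym_mem g⟩ : symSpace N q) : symSpace N q) : MvPolynomial (Fin N) ℂ)
      = ∑ g : MonoT N q, c g • msym (monoExp g) by push_cast; rfl] at this
  rw [coeff_sum] at this
  simp_rw [coeff_smul, coeff_monoExp_msym, smul_eq_mul, mul_ite, mul_one, mul_zero] at this
  rwa [Finset.sum_ite_eq' Finset.univ g₀ c, if_pos (Finset.mem_univ _)] at this

lemma span_basisFam : ⊤ ≤ Submodule.span ℂ (Set.range (basisFam N q)) := by
  rintro ⟨P, hP⟩ -
  obtain ⟨hsym, hdeg⟩ := Submodule.mem_inf.mp hP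
  rw [mem_restrictDegree] at hdeg
  have hsym' : P.IsSymmetric := (mem_symmetricSubalgebra _).mp hsym
  have hrepr := repr_eq P hsym' hdeg
  have : (⟨P, hP⟩ : symSpace N q)
      = ∑ g : MonoT N q, coeff (monoExp g) P • basisFam N q g := by
    apply Subtype.ext
    push_cast
    exact hrepr
  rw [this]
  exact Submodule.sum_mem _ fun g _ =>
    Submodule.smul_mem _ _ (Submodule.subset_span (Set.mem_range_self g))

noncomputable def basisSymSpace : Module.Basis (MonoT N q) ℂ (symSpace N q) :=
  Module.Basis.mk linearIndependent_basisFam span_basisFam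

lemma finrank_symSpace : Module.finrank ℂ (symSpace N q) = Fintype.card (MonoT N q) :=
  Module.finrank_eq_card_basis basisSymSpace


noncomputable def monoToSym (g : MonoT N q) : Sym (Fin (q+1)) N :=
  ⟨(List.ofFn g.1 : Multiset (Fin (q+1))), by simp⟩

lemma monoToSym_bijective : Function.Bijective (monoToSym : MonoT N q → Sym (Fin (q+1)) N) := by
  constructor
  · rintro ⟨f, hf⟩ ⟨f', hf'⟩ h
    have h1 : (List.ofFn f : Multiset (Fin (q+1))) = (List.ofFn f' : Multiset (Fin (q+1))) :=
      congrArg Subtype.val h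
    have h2 : List.Perm (List.ofFn f) (List.ofFn f') := Multiset.coe_eq_coe.mp h1
    have h3 : List.ofFn f = List.ofFn f' :=
      List.Perm.eq_of_sortedLE hf.sortedLE_ofFn hf'.sortedLE_ofFn h2
    exact Subtype.ext (List.ofFn_injective h3)
  · rintro ⟨s, hs⟩
    obtain ⟨l, rfl⟩ := Quotient.exists_rep s
    have hs' : l.length = N := by simpa using hs
    subst hs'
    refine ⟨⟨l.get ∘ Tuple.sort l.get, Tuple.monotone_sort l.get⟩, ?_⟩
    apply Subtype.ext
    show ((List.ofFn (l.get ∘ Tuple.sort l.get) : Multiset (Fin (q+1)))) = _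
    rw [Multiset.coe_eq_coe.mpr ((Tuple.sort l.get).ofFn_comp_perm l.get)]
    rw [List.ofFn_get]
    rfl

lemma card_MonoT : Fintype.card (MonoT N q) = (N + q).choose q := by
  rw [Fintype.card_of_bijective monoToSym_bijective, Sym.card_sym_eq_choose]
  rw [Fintype.card_fin]
  have h1 : q + 1 + N - 1 = N + q := by omega
  rw [h1]
  have h2 := Nat.choose_symm (Nat.le_add_left q N)
  rwa [show N + q - q = N by omega] at h2



lemma degreeOf_le_of_mem_restrictDegree {x : MvPolynomial (Fin N) ℂ} {d : ℕ}
    (hx : x ∈ restrictDegree (Fin N) ℂ d) (i : Fin N) : degreeOf i x ≤ d :=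
  degreeOf_le_iff.mpr fun m hm => (mem_restrictDegree _ _ _).mp hx m hm i

lemma mem_restrictDegree_of_degreeOf_le {x : MvPolynomial (Fin N) ℂ} {d : ℕ}
    (hx : ∀ i, degreeOf i x ≤ d) : x ∈ restrictDegree (Fin N) ℂ d :=
  (mem_restrictDegree _ _ _).mpr fun m hm i => le_trans (monomial_le_degreeOf i hm) (hx i)

end LaughlinAux

open LaughlinAux in
/-- Let `N ≥ 1`, `b ≥ 1`, `d ≥ 0` and `p = d - b(N-1)`.  The space of polynomials
`f ∈ ℂ[X₁,…,X_N]` of the form `f = (∏_{i<j}(Xᵢ - Xⱼ))^b · P` with `P` symmetric,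
whose degree in each variable is at most `d`, has dimension `C(N+p, p)` if
`p ≥ 0`, and is the zero space if `p < 0`. -/
theorem finrank_laughlin_space_genus_zero (N b d : ℕ) (hN : 1 ≤ N) (hb : 1 ≤ b)
    (p : ℤ) (hp : p = (d : ℤ) - (b : ℤ) * ((N : ℤ) - 1)) :
    (0 ≤ p →
      Module.finrank ℂ
        ↥(Submodule.map (LinearMap.mulLeft ℂ (vandermondeProd N ^ b))
            (MvPolynomial.symmetricSubalgebra (Fin N) ℂ).toSubmodule ⊓
          MvPolynomial.restrictDegree (Fin N) ℂ d) =
        (N + p.toNat).choose p.toNat) ∧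
    (p < 0 →
      (Submodule.map (LinearMap.mulLeft ℂ (vandermondeProd N ^ b))
          (MvPolynomial.symmetricSubalgebra (Fin N) ℂ).toSubmodule ⊓
        MvPolynomial.restrictDegree (Fin N) ℂ d) = ⊥) := by
  obtain ⟨n, rfl⟩ : ∃ n, N = n + 1 := ⟨N - 1, by omega⟩
  set V : MvPolynomial (Fin (n+1)) ℂ := vandermondeProd (n+1) with hVdef
  have hV : V ≠ 0 := vandermondeProd_ne_zero
  have hVb : V ^ b ≠ 0 := pow_ne_zero _ hV
  have hdegVb : ∀ i : Fin (n+1), MvPolynomial.degreeOf i (V ^ b) = b * n := by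
    intro i
    rw [degreeOf_pow_eq i V hV b, degreeOf_vandermondeProd]
  have hinj : Function.Injective (LinearMap.mulLeft ℂ (V ^ b)) := by
    intro x y hxy
    simp only [LinearMap.mulLeft_apply] at hxy
    exact mul_left_cancel₀ hVb hxy
  constructor
  · -- p ≥ 0 case
    intro hp0
    set q : ℕ := p.toNat with hq
    have hbn : (b:ℤ) * ((((n:ℤ)+1)) - 1) = (b:ℤ) * (n:ℤ) := by ring
    have hd : d = b * n + q := by
      have : p = (d : ℤ) - (b:ℤ) * (n:ℤ) := by rw [hp]; push_cast; ring
      omega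
    have hTP : Submodule.map (LinearMap.mulLeft ℂ (V ^ b))
          (MvPolynomial.symmetricSubalgebra (Fin (n+1)) ℂ).toSubmodule ⊓
        MvPolynomial.restrictDegree (Fin (n+1)) ℂ d
        = Submodule.map (LinearMap.mulLeft ℂ (V ^ b)) (symSpace (n+1) q) := by
      ext x
      rw [Submodule.mem_inf, Submodule.mem_map, Submodule.mem_map]
      constructor
      · rintro ⟨⟨P, hPsym, rfl⟩, hxdeg⟩
        refine ⟨P, Submodule.mem_inf.mpr ⟨hPsym, ?_⟩, rfl⟩
        apply mem_restrictDegree_of_degreeOf_le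
        intro i
        by_cases hP0 : P = 0
        · simp [hP0]
        have hx : degreeOf i ((LinearMap.mulLeft ℂ (V ^ b)) P) ≤ d :=
          degreeOf_le_of_mem_restrictDegree hxdeg i
        rw [LinearMap.mulLeft_apply, degreeOf_mul_eq' i _ _ hVb hP0, hdegVb i] at hx
        omega
      · rintro ⟨P, hPmem, rfl⟩
        obtain ⟨hPsym, hPdeg⟩ := Submodule.mem_inf.mp hPmem
        refine ⟨⟨P, hPsym, rfl⟩, ?_⟩
        apply mem_restrictDegree_of_degreeOf_le
        intro i
        rw [LinearMap.mulLeft_apply]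
        calc degreeOf i (V ^ b * P) ≤ degreeOf i (V ^ b) + degreeOf i P :=
              degreeOf_mul_le i _ _
          _ ≤ b * n + q := by
              rw [hdegVb i]
              exact Nat.add_le_add_left (degreeOf_le_of_mem_restrictDegree hPdeg i) _
          _ = d := hd.symm
    rw [hTP]
    have hequiv := Submodule.equivMapOfInjective (LinearMap.mulLeft ℂ (V ^ b)) hinj
      (symSpace (n+1) q)
    rw [← LinearEquiv.finrank_eq hequiv, finrank_symSpace, card_MonoT]
  · -- p < 0 case
    intro hp0
    rw [eq_bot_iff]
    rintro x hx
    rw [Submodule.mem_inf, Submodule.mem_map] at hx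
    obtain ⟨⟨P, hPsym, rfl⟩, hxdeg⟩ := hx
    rw [Submodule.mem_bot]
    by_contra hx0
    have hP0 : P ≠ 0 := by
      intro h
      apply hx0
      simp [h]
    have hdlt : d < b * n := by
      have : p = (d : ℤ) - (b:ℤ) * (n:ℤ) := by rw [hp]; push_cast; ring
      omega
    have h1 : degreeOf (0 : Fin (n+1)) ((LinearMap.mulLeft ℂ (V ^ b)) P) ≤ d :=
      degreeOf_le_of_mem_restrictDegree hxdeg 0
    rw [LinearMap.mulLeft_apply, degreeOf_mul_eq' 0 _ _ hVb hP0, hdegVb 0] at h1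
    omega
end
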